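/- arXiv:1011.2308 — 7 statements merged into one kernel-verified Lean document; each statement's English description precedes it below -/
import Mathlib

section
/- The number of trees on n labeled vertices is n^(n-2) for every integer n ≥ 2 (Cayley's formula). -/
open Function

namespace CayleyAux

/-- `f` is a rooted tree-function with root `b`. -/
def Rooted {V : Type*} (b : V) (f : V → V) : Prop :=
  f b = b ∧ ∀ v, ∃ k, f^[k] v = b

section Depth
variable {V : Type*} {b : V} {f : V → V}

open Classical in
/-- distance to the root along `f`. -/
noncomputable def depth (hf : Rooted b f) (v : V) : ℕ := Nat.find (hf.2 v)

open Classical in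
lemma depth_spec (hf : Rooted b f) (v : V) : f^[depth hf v] v = b := Nat.find_spec (hf.2 v)

open Classical in
lemma depth_root (hf : Rooted b f) : depth hf b = 0 := by
  simp [depth, Nat.find_eq_zero]

open Classical in
lemma depth_pos (hf : Rooted b f) {v : V} (hv : v ≠ b) : 0 < depth hf v := by
  rcases Nat.eq_zero_or_pos (depth hf v) with h | h
  · exact absurd (by simpa [h] using depth_spec hf v) hv
  · exact h

open Classical in
lemma depth_apply (hf : Rooted b f) {v : V} (hv : v ≠ b) :
    depth hf v = depth hf (f v) + 1 := by
  have h1 : 0 < depth hf v := depth_pos hf hv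
  have le1 : depth hf v ≤ depth hf (f v) + 1 := by
    apply Nat.find_le
    rw [Function.iterate_succ_apply]
    exact depth_spec hf (f v)
  have le2 : depth hf (f v) ≤ depth hf v - 1 := by
    apply Nat.find_le
    rw [← Function.iterate_succ_apply, Nat.succ_eq_add_one, Nat.sub_add_cancel h1]
    exact depth_spec hf v
  omega

lemma depth_lt (hf : Rooted b f) {v : V} (hv : v ≠ b) :
    depth hf (f v) < depth hf v := by
  rw [depth_apply hf hv]; omega

lemma depth_iterate (hf : Rooted b f) (v : V) {k : ℕ} (hk : k ≤ depth hf v) :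
    depth hf (f^[k] v) = depth hf v - k := by
  induction k with
  | zero => simp
  | succ k ih =>
    have hkle : k ≤ depth hf v := by omega
    have hne : f^[k] v ≠ b := by
      intro h
      have h2 := ih hkle
      rw [h, depth_root hf] at h2
      omega
    have h3 := depth_apply hf hne
    have h4 := ih hkle
    rw [Function.iterate_succ_apply']
    omega

end Depth

/-- A graph admitting a "potential" that changes along each edge and such that each
vertex has at most one lower neighbor is acyclic. -/
lemma isAcyclic_of_depth {V : Type*} [DecidableEq V] (G : SimpleGraph V) (d : V → ℕ)
    (hadj : ∀ u v, G.Adj u v → d u ≠ d v)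
    (huniq : ∀ v w1 w2, G.Adj v w1 → G.Adj v w2 → d w1 < d v → d w2 < d v → w1 = w2) :
    G.IsAcyclic := by
  intro v0 c0 hc0
  obtain ⟨u, hu, hmax⟩ := (c0.support.toFinset).exists_max_image d
    ⟨v0, by simp [SimpleGraph.Walk.start_mem_support]⟩
  rw [List.mem_toFinset] at hu
  set c : G.Walk u u := c0.rotate u hu with hc
  have hcyc : c.IsCycle := hc0.rotate hu
  have hsupp : ∀ w ∈ c.support, d w ≤ d u := by
    intro w hw
    rw [SimpleGraph.Walk.support_eq_cons c] at hw
    rcases List.mem_cons.mp hw with h | h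
    · exact le_of_eq (by rw [h])
    · apply hmax
      rw [List.mem_toFinset]
      have hrot := SimpleGraph.Walk.support_rotate c0 u hu
      have : w ∈ c0.support.tail := (hrot.mem_iff).mp h
      rw [SimpleGraph.Walk.support_eq_cons c0]
      exact List.mem_cons_of_mem _ this
  -- destructure the cycle
  cases hx : c with
  | nil =>
    rw [hx] at hcyc
    exact SimpleGraph.Walk.IsCycle.not_of_nil hcyc
  | cons hadj' p =>
    rename_i x
    have hcyc' : (SimpleGraph.Walk.cons hadj' p).IsCycle := hx ▸ hcyc
    rw [SimpleGraph.Walk.cons_isCycle_iff] at hcyc'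
    obtain ⟨hp, hedge⟩ := hcyc'
    -- last vertex before u on p
    have hpnil : ¬ p.Nil := by
      intro hnil
      have := hcyc.three_le_length
      rw [hx] at this
      simp [SimpleGraph.Walk.length_cons, SimpleGraph.Walk.nil_iff_length_eq.mp hnil] at this
    have hprnil : ¬ p.reverse.Nil := by
      rw [SimpleGraph.Walk.not_nil_iff_lt_length, SimpleGraph.Walk.length_reverse]
      rw [SimpleGraph.Walk.not_nil_iff_lt_length] at hpnil
      exact hpnil
    set y : V := p.reverse.getVert 1 with hy
    have hyadj : G.Adj u y := p.reverse.adj_snd hprnil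
    have hyedge : s(u, y) ∈ p.edges := by
      have h1 : s(u, y) ∈ p.reverse.edges := by
        rw [← SimpleGraph.Walk.cons_tail_eq p.reverse hprnil, SimpleGraph.Walk.edges_cons]
        exact List.mem_cons_self
      rwa [SimpleGraph.Walk.edges_reverse, List.mem_reverse] at h1
    -- x and y have smaller depth than u
    have hxs : x ∈ c.support := by
      rw [hx]; simp [SimpleGraph.Walk.support_cons, SimpleGraph.Walk.start_mem_support]
    have hys : y ∈ c.support := by
      rw [hx]
      simp only [SimpleGraph.Walk.support_cons, List.mem_cons]
      right
      exact SimpleGraph.Walk.snd_mem_support_of_mem_edges p hyedge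
    have hdx : d x < d u := lt_of_le_of_ne (hsupp x hxs) (fun h => hadj u x hadj' h.symm)
    have hdy : d y < d u := lt_of_le_of_ne (hsupp y hys) (fun h => hadj u y hyadj h.symm)
    have : x = y := huniq u x y hadj' hyadj hdx hdy
    rw [← this] at hyedge
    exact hedge hyedge

open Classical in
lemma depth_eq_of {V : Type*} {b : V} {f : V → V} (hf : Rooted b f) {v : V} {k : ℕ}
    (h1 : f^[k] v = b) (h2 : ∀ j < k, f^[j] v ≠ b) : depth hf v = k := by
  have hle : depth hf v ≤ k := Nat.find_le h1
  rcases lt_or_eq_of_le hle with h | h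
  · exact absurd (depth_spec hf v) (h2 _ h)
  · exact h

section Part1
variable {V : Type*} [DecidableEq V]

variable (r : V)

/-- the graph with edges `{v, f v}` for `v ≠ r`. -/
def graphOf (f : V → V) : SimpleGraph V :=
  SimpleGraph.fromRel (fun u v => u ≠ r ∧ v = f u)

lemma graphOf_adj (f : V → V) (u v : V) :
    (graphOf r f).Adj u v ↔ u ≠ v ∧ ((u ≠ r ∧ v = f u) ∨ (v ≠ r ∧ u = f v)) := by
  simp [graphOf, SimpleGraph.fromRel_adj]

variable {f : V → V} {r}

lemma apply_ne_self (hf : Rooted r f) {v : V} (hv : v ≠ r) : f v ≠ v :=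
  fun h => absurd (h ▸ depth_lt hf hv) (by omega)

lemma adj_apply (hf : Rooted r f) {v : V} (hv : v ≠ r) : (graphOf r f).Adj v (f v) := by
  rw [graphOf_adj]
  exact ⟨(apply_ne_self hf hv).symm, Or.inl ⟨hv, rfl⟩⟩

lemma reachable_root (hf : Rooted r f) (v : V) : (graphOf r f).Reachable v r := by
  have H : ∀ (m : ℕ) (v : V), depth hf v = m → (graphOf r f).Reachable v r := by
    intro m
    induction m using Nat.strong_induction_on with
    | _ m ih =>
      intro v hv
      by_cases hvr : v = r
      · subst hvr; exact SimpleGraph.Reachable.refl _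
      · exact ((adj_apply hf hvr).reachable).trans
          (ih (depth hf (f v)) (hv ▸ depth_lt hf hvr) (f v) rfl)
  exact H _ v rfl

lemma isTree_graphOf (hf : Rooted r f) : (graphOf r f).IsTree := by
  refine ⟨?_, ?_⟩
  · haveI : Nonempty V := ⟨r⟩
    exact SimpleGraph.Connected.mk (fun u v => (reachable_root hf u).trans (reachable_root hf v).symm)
  · apply isAcyclic_of_depth _ (depth hf)
    · intro u v huv
      rw [graphOf_adj] at huv
      rcases huv.2 with ⟨hu, rfl⟩ | ⟨hv, rfl⟩
      · have := depth_lt hf hu; omega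
      · have := depth_lt hf hv; omega
    · intro v w1 w2 h1 h2 hd1 hd2
      rw [graphOf_adj] at h1 h2
      have e1 : w1 = f v := by
        rcases h1.2 with ⟨_, h⟩ | ⟨hw, h⟩
        · exact h
        · exfalso; have := depth_lt hf hw; rw [← h] at this; omega
      have e2 : w2 = f v := by
        rcases h2.2 with ⟨_, h⟩ | ⟨hw, h⟩
        · exact h
        · exfalso; have := depth_lt hf hw; rw [← h] at this; omega
      rw [e1, e2]

variable (r) in
/-- parent function of a tree: the next vertex on the unique path to `r`. -/
noncomputable def treeFun (G : SimpleGraph V) (hG : G.IsTree) : V → V :=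
  fun v => if v = r then r else ((hG.existsUnique_path v r).choose.getVert 1)

lemma treeFun_root (G : SimpleGraph V) (hG : G.IsTree) : treeFun r G hG r = r := by
  simp [treeFun]

lemma choose_not_nil (G : SimpleGraph V) (hG : G.IsTree) {v : V} (hv : v ≠ r) :
    ¬ (hG.existsUnique_path v r).choose.Nil :=
  SimpleGraph.Walk.not_nil_of_ne hv

lemma adj_treeFun (G : SimpleGraph V) (hG : G.IsTree) {v : V} (hv : v ≠ r) :
    G.Adj v (treeFun r G hG v) := by
  rw [treeFun, if_neg hv]
  exact (hG.existsUnique_path v r).choose.adj_snd (choose_not_nil G hG hv)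

lemma choose_length_treeFun (G : SimpleGraph V) (hG : G.IsTree) {v : V} (hv : v ≠ r) :
    (hG.existsUnique_path (treeFun r G hG v) r).choose.length + 1
      = (hG.existsUnique_path v r).choose.length := by
  set p := (hG.existsUnique_path v r).choose with hp
  have hpath : p.IsPath := (hG.existsUnique_path v r).choose_spec.1
  have hnil : ¬ p.Nil := choose_not_nil G hG hv
  have htail : p.tail.IsPath := hpath.tail
  have h2 : treeFun r G hG v = p.getVert 1 := by rw [treeFun, if_neg hv]
  -- the chosen path from `p.getVert 1` is `p.tail` (uniqueness)
  have h3 : ∀ (q : G.Walk (p.getVert 1) r), q.IsPath →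
      q = (hG.existsUnique_path (p.getVert 1) r).choose :=
    fun q hq => ((hG.existsUnique_path (p.getVert 1) r).choose_spec.2 q hq)
  have h4 := h3 p.tail htail
  have h5 : (hG.existsUnique_path (p.getVert 1) r).choose.length = p.tail.length := by rw [← h4]
  have h6 := SimpleGraph.Walk.length_tail_add_one hnil
  rw [h2]
  omega

lemma rooted_treeFun (G : SimpleGraph V) (hG : G.IsTree) : Rooted r (treeFun r G hG) := by
  refine ⟨treeFun_root G hG, ?_⟩
  have H : ∀ (m : ℕ) (v : V), (hG.existsUnique_path v r).choose.length = m →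
      ∃ k, (treeFun r G hG)^[k] v = r := by
    intro m
    induction m using Nat.strong_induction_on with
    | _ m ih =>
      intro v hv
      by_cases hvr : v = r
      · exact ⟨0, hvr⟩
      · obtain ⟨k, hk⟩ := ih ((hG.existsUnique_path (treeFun r G hG v) r).choose.length)
          (by have := choose_length_treeFun G hG hvr; omega) (treeFun r G hG v) rfl
        exact ⟨k + 1, by rwa [Function.iterate_succ_apply]⟩
  exact fun v => H _ v rfl


lemma graphOf_treeFun [Fintype V] (G : SimpleGraph V) (hG : G.IsTree) :
    graphOf r (treeFun r G hG) = G := by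
  classical
  have hle : graphOf r (treeFun r G hG) ≤ G := by
    intro u v h
    rw [graphOf_adj] at h
    rcases h.2 with ⟨hu, rfl⟩ | ⟨hv, rfl⟩
    · exact adj_treeFun G hG hu
    · exact (adj_treeFun G hG hv).symm
  haveI : Fintype G.edgeSet := Fintype.ofFinite _
  haveI : Fintype (graphOf r (treeFun r G hG)).edgeSet := Fintype.ofFinite _
  have h1 := hG.card_edgeFinset
  have h2 := (isTree_graphOf (rooted_treeFun (r := r) G hG)).card_edgeFinset
  have hsub := SimpleGraph.edgeFinset_subset_edgeFinset.2 hle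
  exact SimpleGraph.edgeFinset_inj.1 (Finset.eq_of_subset_of_card_le hsub (by omega))

lemma exists_good_path (hf : Rooted r f) (v : V) :
    ∃ p : (graphOf r f).Walk v r, p.IsPath ∧ (∀ w ∈ p.support, depth hf w ≤ depth hf v) ∧
      (v ≠ r → p.getVert 1 = f v) := by
  have H : ∀ (m : ℕ) (v : V), depth hf v = m →
      ∃ p : (graphOf r f).Walk v r, p.IsPath ∧ (∀ w ∈ p.support, depth hf w ≤ depth hf v) ∧
        (v ≠ r → p.getVert 1 = f v) := by
    intro m
    induction m using Nat.strong_induction_on with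
    | _ m ih =>
      intro v hv
      by_cases hvr : v = r
      · subst hvr
        refine ⟨SimpleGraph.Walk.nil, SimpleGraph.Walk.IsPath.nil, ?_, fun h => absurd rfl h⟩
        intro w hw
        rw [SimpleGraph.Walk.support_nil, List.mem_singleton] at hw
        exact le_of_eq (by rw [hw])
      · obtain ⟨q, hq, hqs, _⟩ := ih (depth hf (f v)) (hv ▸ depth_lt hf hvr) (f v) rfl
        have hnotmem : v ∉ q.support := by
          intro hmem
          have := hqs v hmem
          have := depth_lt hf hvr
          omega
        refine ⟨SimpleGraph.Walk.cons (adj_apply hf hvr) q, hq.cons hnotmem, ?_, ?_⟩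
        · intro w hw
          rw [SimpleGraph.Walk.support_cons, List.mem_cons] at hw
          rcases hw with rfl | hw
          · exact le_rfl
          · have := hqs w hw
            have := depth_lt hf hvr
            omega
        · intro _
          simp [SimpleGraph.Walk.getVert_cons_succ, SimpleGraph.Walk.getVert_zero]
  exact H _ v rfl

lemma treeFun_graphOf (hf : Rooted r f) :
    treeFun r (graphOf r f) (isTree_graphOf hf) = f := by
  funext v
  by_cases hvr : v = r
  · rw [hvr, treeFun_root, hf.1]
  · obtain ⟨p, hp, _, hv1⟩ := exists_good_path hf v
    have hspec := ((isTree_graphOf hf).existsUnique_path v r).choose_spec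
    have heq : p = ((isTree_graphOf hf).existsUnique_path v r).choose := hspec.2 p hp
    rw [treeFun, if_neg hvr, ← heq]
    exact hv1 hvr

/-- Part 1: trees on `V` are in bijection with functions rooted at `r`. -/
noncomputable def treeEquiv [Fintype V] (r : V) :
    {G : SimpleGraph V // G.IsTree} ≃ {f : V → V // Rooted r f} where
  toFun := fun G => ⟨treeFun r G.1 G.2, rooted_treeFun G.1 G.2⟩
  invFun := fun f => ⟨graphOf r f.1, isTree_graphOf f.2⟩
  left_inv := fun G => Subtype.ext (graphOf_treeFun G.1 G.2)
  right_inv := fun f => Subtype.ext (treeFun_graphOf f.2)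

end Part1

----------------------------------------------------------------
-- Stage 3 : Joyal's bijection
----------------------------------------------------------------

section Joyal

variable {V : Type*} [Fintype V] [LinearOrder V]

/-- periodic points of `g`. -/
def Per (g : V → V) (w : V) : Prop := ∃ k, 0 < k ∧ g^[k] w = w

variable {g : V → V}

lemma per_apply {w : V} (h : Per g w) : Per g (g w) := by
  obtain ⟨k, hk, hw⟩ := h
  refine ⟨k, hk, ?_⟩
  rw [← Function.iterate_succ_apply, Function.iterate_succ_apply', hw]

lemma per_iterate {w : V} (h : Per g w) (j : ℕ) : Per g (g^[j] w) := by
  induction j with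
  | zero => exact h
  | succ j ih => rw [Function.iterate_succ_apply']; exact per_apply ih

lemma per_mul {w : V} (h : Per g w) {K : ℕ} (hK : 0 < K) (hd : ∃ k, 0 < k ∧ K = k * (h.choose)) :
    True := trivial

lemma per_iterate_fixed {w : V} {k s : ℕ} (hw : g^[k] w = w) : g^[k * s] w = w := by
  rw [Function.iterate_mul]
  induction s with
  | zero => rfl
  | succ s ih => rw [Function.iterate_succ_apply', ih, hw]

lemma per_inj {w w' : V} (h : Per g w) (h' : Per g w') (he : g w = g w') : w = w' := by
  obtain ⟨k, hk, hw⟩ := h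
  obtain ⟨k', hk', hw'⟩ := h'
  have h1 : g^[k * k'] w = w := per_iterate_fixed hw
  have h2 : g^[k * k'] w' = w' := by rw [Nat.mul_comm]; exact per_iterate_fixed hw'
  have hkk : 0 < k * k' := Nat.mul_pos hk hk'
  have e1 : w = g^[k * k' - 1] (g w) := by
    conv_lhs => rw [← h1]
    rw [← Function.iterate_succ_apply, Nat.succ_eq_add_one, Nat.sub_add_cancel hkk]
  have e2 : w' = g^[k * k' - 1] (g w') := by
    conv_lhs => rw [← h2]
    rw [← Function.iterate_succ_apply, Nat.succ_eq_add_one, Nat.sub_add_cancel hkk]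
  rw [e1, e2, he]

lemma per_surj {w : V} (h : Per g w) : ∃ w', Per g w' ∧ g w' = w := by
  obtain ⟨k, hk, hw⟩ := h
  refine ⟨g^[k - 1] w, per_iterate ⟨k, hk, hw⟩ _, ?_⟩
  have h := Function.iterate_succ_apply' g (k - 1) w
  rw [← h, Nat.succ_eq_add_one, Nat.sub_add_cancel hk]
  exact hw

lemma exists_per_iterate (g : V → V) (v : V) : ∃ k, Per g (g^[k] v) := by
  have hninj : ¬ Function.Injective (fun k : Fin (Fintype.card V + 1) => g^[(k : ℕ)] v) := by
    intro hinj
    have := Fintype.card_le_of_injective _ hinj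
    simp [Fintype.card_fin] at this
  rw [Function.not_injective_iff] at hninj
  obtain ⟨i, j, hij, hne⟩ := hninj
  rcases Ne.lt_or_gt hne with h | h
  · refine ⟨(i : ℕ), (j : ℕ) - (i : ℕ), by omega, ?_⟩
    rw [← Function.iterate_add_apply]
    rw [show (j : ℕ) - (i : ℕ) + (i : ℕ) = (j : ℕ) by omega]
    exact hij.symm
  · refine ⟨(j : ℕ), (i : ℕ) - (j : ℕ), by omega, ?_⟩
    rw [← Function.iterate_add_apply]
    rw [show (i : ℕ) - (j : ℕ) + (j : ℕ) = (i : ℕ) by omega]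
    exact hij

open Classical in
/-- the finset of periodic points. -/
noncomputable def perSet (g : V → V) : Finset V := Finset.univ.filter (Per g)

open Classical in
lemma mem_perSet {v : V} : v ∈ perSet g ↔ Per g v := by
  simp [perSet]

/-- number of periodic points. -/
noncomputable def pm (g : V → V) : ℕ := (perSet g).card

lemma pm_pos [Nonempty V] (g : V → V) : 0 < pm g := by
  obtain ⟨k, hk⟩ := exists_per_iterate g (Classical.arbitrary V)
  exact Finset.card_pos.mpr ⟨_, mem_perSet.mpr hk⟩

/-- the sorted enumeration of periodic points. -/
noncomputable def sortIso (g : V → V) : Fin (pm g) ≃o (perSet g : Finset V) :=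
  (perSet g).orderIsoOfFin rfl

/-- the Joyal chain: image under `g` of the sorted periodic points. -/
noncomputable def chain (g : V → V) : Fin (pm g) → V := fun i => g ((sortIso g i : V))

lemma per_chain (i : Fin (pm g)) : Per g (chain g i) :=
  per_apply (mem_perSet.mp (sortIso g i).2)

lemma chain_mem (i : Fin (pm g)) : chain g i ∈ perSet g := mem_perSet.mpr (per_chain i)

lemma chain_inj : Function.Injective (chain g) := by
  intro i j h
  have := per_inj (mem_perSet.mp (sortIso g i).2) (mem_perSet.mp (sortIso g j).2) h
  exact (sortIso g).injective (Subtype.ext this)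

lemma chain_surj {v : V} (hv : Per g v) : ∃ i, chain g i = v := by
  obtain ⟨w', hw', he⟩ := per_surj hv
  exact ⟨(sortIso g).symm ⟨w', mem_perSet.mpr hw'⟩, by
    simp only [chain, OrderIso.apply_symm_apply]; exact he⟩

open Classical in
/-- Joyal's tree function associated with `g`. -/
noncomputable def fwdF (g : V → V) : V → V := fun v =>
  if h : ∃ i : Fin (pm g), chain g i = v ∧ (i : ℕ) + 1 < pm g then
    chain g ⟨(h.choose : ℕ) + 1, h.choose_spec.2⟩
  else if Per g v then v else g v

open Classical in
lemma fwdF_chain {i : Fin (pm g)} (hi : (i : ℕ) + 1 < pm g) :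
    fwdF g (chain g i) = chain g ⟨(i : ℕ) + 1, hi⟩ := by
  have h : ∃ j : Fin (pm g), chain g j = chain g i ∧ (j : ℕ) + 1 < pm g := ⟨i, rfl, hi⟩
  rw [fwdF, dif_pos h]
  have : h.choose = i := chain_inj h.choose_spec.1
  congr 1
  rw [Fin.mk.injEq, this]

open Classical in
lemma fwdF_last {i : Fin (pm g)} (hi : (i : ℕ) + 1 = pm g) :
    fwdF g (chain g i) = chain g i := by
  have h : ¬ ∃ j : Fin (pm g), chain g j = chain g i ∧ (j : ℕ) + 1 < pm g := by
    rintro ⟨j, hj, hlt⟩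
    have : j = i := chain_inj hj
    omega
  rw [fwdF, dif_neg h, if_pos (per_chain i)]

open Classical in
lemma fwdF_nonper {v : V} (hv : ¬ Per g v) : fwdF g v = g v := by
  have h : ¬ ∃ j : Fin (pm g), chain g j = v ∧ (j : ℕ) + 1 < pm g := by
    rintro ⟨j, hj, _⟩
    exact hv (hj ▸ per_chain j)
  rw [fwdF, dif_neg h, if_neg hv]

variable [Nonempty V]

/-- root of the Joyal tree. -/
noncomputable def fwdB (g : V → V) : V := chain g ⟨pm g - 1, by have := pm_pos g; omega⟩

/-- mark of the Joyal tree. -/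
noncomputable def fwdA (g : V → V) : V := chain g ⟨0, pm_pos g⟩

lemma fwdF_chain_iterate (g : V → V) :
    ∀ (j : ℕ) (i : Fin (pm g)) (hij : (i : ℕ) + j ≤ pm g - 1),
      (fwdF g)^[j] (chain g i) = chain g ⟨(i : ℕ) + j, by have := pm_pos g; omega⟩ := by
  intro j
  induction j with
  | zero => intro i hi; simp
  | succ j ih =>
    intro i hi
    have hlt : (i : ℕ) + 1 < pm g := by have := pm_pos g; omega
    rw [Function.iterate_succ_apply, fwdF_chain hlt]
    have := ih ⟨(i : ℕ) + 1, hlt⟩ (by show (i : ℕ) + 1 + j ≤ pm g - 1; omega)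
    rw [this]
    congr 1
    simp only [Fin.mk.injEq]
    omega

open Classical in
lemma fwdF_reaches_b (g : V → V) (v : V) : ∃ k, (fwdF g)^[k] v = fwdB g := by
  -- first reach a periodic point, along which fwdF agrees with g
  obtain ⟨k0, hk0⟩ := exists_per_iterate g v
  have hmin := Nat.find_spec (⟨k0, hk0⟩ : ∃ k, Per g (g^[k] v))
  set k1 := Nat.find (⟨k0, hk0⟩ : ∃ k, Per g (g^[k] v)) with hk1def
  have hagree : ∀ j ≤ k1, (fwdF g)^[j] v = g^[j] v := by
    intro j hj
    induction j with
    | zero => rfl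
    | succ j ih =>
      have hjlt : j < k1 := by omega
      have hnper : ¬ Per g (g^[j] v) := Nat.find_min _ hjlt
      rw [Function.iterate_succ_apply', ih (by omega), fwdF_nonper hnper]
      exact (Function.iterate_succ_apply' g j v).symm
  -- now from the periodic point reach b along the chain
  obtain ⟨i, hi⟩ := chain_surj hmin
  have hreach := fwdF_chain_iterate g ((pm g - 1) - (i : ℕ)) i (by omega)
  refine ⟨(pm g - 1 - (i : ℕ)) + k1, ?_⟩
  rw [Function.iterate_add_apply, hagree k1 le_rfl, ← hi, hreach]
  rw [fwdB]
  congr 1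
  simp only [Fin.mk.injEq]
  omega

lemma rooted_fwdF (g : V → V) : Rooted (fwdB g) (fwdF g) :=
  ⟨fwdF_last (by have := pm_pos g; simp [fwdB]; omega), fwdF_reaches_b g⟩

end Joyal

----------------------------------------------------------------
-- Stage 4 : the inverse (vertebrate → endofunction) and round trips
----------------------------------------------------------------

lemma orderIsoOfFin_congr {V : Type*} [LinearOrder V] {s t : Finset V} {k k' : ℕ}
    (h : s = t) {hs : s.card = k} {ht : t.card = k'} {i : Fin k} {i' : Fin k'}
    (hi : (i : ℕ) = (i' : ℕ)) :
    ((s.orderIsoOfFin hs i : s) : V) = ((t.orderIsoOfFin ht i' : t) : V) := by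
  subst h
  have hk : k = k' := hs.symm.trans ht
  subst hk
  have : i = i' := Fin.ext hi
  subst this
  rfl

section Joyal2

variable {V : Type*} [Fintype V] [LinearOrder V] {b : V} {f : V → V}

lemma iterate_inj_of_rooted (hf : Rooted b f) {v : V} {i j : ℕ}
    (hi : i ≤ depth hf v) (hj : j ≤ depth hf v) (he : f^[i] v = f^[j] v) : i = j := by
  have h1 := depth_iterate hf v hi
  have h2 := depth_iterate hf v hj
  rw [he] at h1
  omega

/-- the spine: orbit of the mark `a` down to the root. -/
noncomputable def spine (hf : Rooted b f) (a : V) : Finset V :=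
  (Finset.range (depth hf a + 1)).image (fun k => f^[k] a)

lemma mem_spine' {hf : Rooted b f} {a v : V} :
    v ∈ spine hf a ↔ ∃ k ≤ depth hf a, f^[k] a = v := by
  simp [spine, Finset.mem_image, Finset.mem_range, Nat.lt_succ_iff]

lemma card_spine (hf : Rooted b f) (a : V) : (spine hf a).card = depth hf a + 1 := by
  rw [spine, Finset.card_image_of_injOn, Finset.card_range]
  intro i hi j hj he
  rw [Finset.coe_range, Set.mem_Iio] at hi hj
  exact iterate_inj_of_rooted hf (by omega) (by omega) he

lemma iterate_mem_spine (hf : Rooted b f) (a : V) {k : ℕ} (hk : k ≤ depth hf a) :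
    f^[k] a ∈ spine hf a := mem_spine'.mpr ⟨k, hk, rfl⟩

lemma root_mem_spine (hf : Rooted b f) (a : V) : b ∈ spine hf a :=
  mem_spine'.mpr ⟨depth hf a, le_rfl, depth_spec hf a⟩

/-- sorted enumeration of the spine. -/
noncomputable def spIso (hf : Rooted b f) (a : V) :
    Fin (depth hf a + 1) ≃o (spine hf a : Finset V) :=
  (spine hf a).orderIsoOfFin (card_spine hf a)

open Classical in
/-- Joyal's inverse: the endofunction built from a doubly-marked tree function. -/
noncomputable def bwdG (hf : Rooted b f) (a : V) : V → V := fun v =>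
  if hv : v ∈ spine hf a then f^[(((spIso hf a).symm ⟨v, hv⟩)).val] a else f v

open Classical in
lemma bwdG_mem (hf : Rooted b f) (a : V) (i : Fin (depth hf a + 1)) :
    bwdG hf a ((spIso hf a i : V)) = f^[(i : ℕ)] a := by
  have hv : (spIso hf a i : V) ∈ spine hf a := (spIso hf a i).2
  rw [bwdG, dif_pos hv]
  have h2 : ((spIso hf a).symm ⟨(spIso hf a i : V), hv⟩) = i := by
    rw [Subtype.coe_eta, OrderIso.symm_apply_apply]
  rw [h2]

open Classical in
lemma bwdG_nonmem (hf : Rooted b f) (a : V) {v : V} (hv : v ∉ spine hf a) :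
    bwdG hf a v = f v := by rw [bwdG, dif_neg hv]

lemma bwdG_maps_spine (hf : Rooted b f) (a : V) {v : V} (hv : v ∈ spine hf a) :
    bwdG hf a v ∈ spine hf a := by
  have h1 : v = (spIso hf a ((spIso hf a).symm ⟨v, hv⟩) : V) := by
    rw [OrderIso.apply_symm_apply]
  rw [h1, bwdG_mem]
  exact iterate_mem_spine hf a (by omega)

/-- the permutation induced by `bwdG` on spine indices. -/
noncomputable def spPerm (hf : Rooted b f) (a : V) :
    Fin (depth hf a + 1) → Fin (depth hf a + 1) := fun i =>
  (spIso hf a).symm ⟨f^[(i : ℕ)] a, iterate_mem_spine hf a (by omega)⟩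

lemma spPerm_inj (hf : Rooted b f) (a : V) : Function.Injective (spPerm hf a) := by
  intro i j h
  have h2 : f^[(i : ℕ)] a = f^[(j : ℕ)] a := by
    have := congrArg (fun x => ((spIso hf a x : V))) h
    simpa [spPerm, OrderIso.apply_symm_apply] using this
  exact Fin.ext (iterate_inj_of_rooted hf (by omega) (by omega) h2)

lemma bwdG_spIso_spPerm (hf : Rooted b f) (a : V) (i : Fin (depth hf a + 1)) :
    bwdG hf a ((spIso hf a i : V)) = (spIso hf a (spPerm hf a i) : V) := by
  rw [bwdG_mem, spPerm, OrderIso.apply_symm_apply]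

/-- every element of the spine is periodic for `bwdG`. -/
lemma spine_subset_per (hf : Rooted b f) (a : V) {v : V} (hv : v ∈ spine hf a) :
    Per (bwdG hf a) v := by
  set E : Equiv.Perm (Fin (depth hf a + 1)) :=
    Equiv.ofBijective _ (Finite.injective_iff_bijective.mp (spPerm_inj hf a)) with hE
  have hiter : ∀ (k : ℕ) (i : Fin (depth hf a + 1)),
      (bwdG hf a)^[k] ((spIso hf a i : V)) = (spIso hf a (E^[k] i) : V) := by
    intro k
    induction k with
    | zero => intro i; rfl
    | succ k ih =>
      intro i
      rw [Function.iterate_succ_apply, bwdG_spIso_spPerm]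
      have : E i = spPerm hf a i := rfl
      rw [Function.iterate_succ_apply, ← this]
      exact ih (E i)
  set i := (spIso hf a).symm ⟨v, hv⟩ with hi
  have hvi : v = (spIso hf a i : V) := by rw [hi, OrderIso.apply_symm_apply]
  refine ⟨orderOf E, orderOf_pos E, ?_⟩
  rw [hvi, hiter]
  congr 2
  rw [Equiv.Perm.iterate_eq_pow, pow_orderOf_eq_one]
  rfl

open Classical in
/-- conversely, periodic points of `bwdG` lie on the spine. -/
lemma per_subset_spine (hf : Rooted b f) (a : V) {v : V} (hv : Per (bwdG hf a) v) :
    v ∈ spine hf a := by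
  by_contra hns
  have hex : ∃ k, f^[k] v ∈ spine hf a :=
    ⟨depth hf v, by rw [depth_spec]; exact root_mem_spine hf a⟩
  set k1 := Nat.find hex with hk1
  have hk1spec : f^[k1] v ∈ spine hf a := Nat.find_spec hex
  have hagree : ∀ j ≤ k1, (bwdG hf a)^[j] v = f^[j] v := by
    intro j hj
    induction j with
    | zero => rfl
    | succ j ih =>
      have hjlt : j < k1 := by omega
      have hnmem : f^[j] v ∉ spine hf a := Nat.find_min hex hjlt
      rw [Function.iterate_succ_apply', ih (by omega), bwdG_nonmem hf a hnmem]
      exact (Function.iterate_succ_apply' f j v).symm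
  have hk1pos : 0 < k1 := by
    rcases Nat.eq_zero_or_pos k1 with h | h
    · rw [h] at hk1spec; exact absurd hk1spec hns
    · exact h
  have hstay : ∀ t, (bwdG hf a)^[k1 + t] v ∈ spine hf a := by
    intro t
    induction t with
    | zero => rw [Nat.add_zero, hagree k1 le_rfl]; exact hk1spec
    | succ t ih =>
      rw [show k1 + (t + 1) = (k1 + t) + 1 by omega, Function.iterate_succ_apply']
      exact bwdG_maps_spine hf a ih
  obtain ⟨K, hK, hKv⟩ := hv
  have h1 : (bwdG hf a)^[K * k1] v = v := per_iterate_fixed hKv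
  have h2 : K * k1 = k1 + (K * k1 - k1) := by
    have := Nat.le_mul_of_pos_left k1 hK
    omega
  rw [h2] at h1
  exact hns (h1 ▸ hstay (K * k1 - k1))

lemma perSet_bwdG (hf : Rooted b f) (a : V) : perSet (bwdG hf a) = spine hf a := by
  ext v
  rw [mem_perSet]
  exact ⟨per_subset_spine hf a, spine_subset_per hf a⟩

lemma pm_bwdG (hf : Rooted b f) (a : V) : pm (bwdG hf a) = depth hf a + 1 := by
  rw [pm, perSet_bwdG, card_spine]

lemma chain_bwdG (hf : Rooted b f) (a : V) (j : Fin (pm (bwdG hf a))) :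
    chain (bwdG hf a) j = f^[(j : ℕ)] a := by
  have hj : (j : ℕ) < depth hf a + 1 := by
    have h0 := j.2
    have h1 := pm_bwdG hf a
    omega
  have h1 : ((sortIso (bwdG hf a) j : _) : V) = ((spIso hf a ⟨(j : ℕ), hj⟩ : _) : V) :=
    orderIsoOfFin_congr (perSet_bwdG hf a) rfl
  rw [chain, h1, bwdG_mem]

end Joyal2

----------------------------------------------------------------
-- Stage 5 : round trips
----------------------------------------------------------------

section Joyal3

variable {V : Type*} [Fintype V] [LinearOrder V] [Nonempty V] {b : V} {f : V → V}

lemma fwdA_bwdG (hf : Rooted b f) (a : V) : fwdA (bwdG hf a) = a := by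
  rw [fwdA, chain_bwdG]
  rfl

lemma fwdB_bwdG (hf : Rooted b f) (a : V) : fwdB (bwdG hf a) = b := by
  rw [fwdB, chain_bwdG]
  have h1 := pm_bwdG hf a
  have h2 : pm (bwdG hf a) - 1 = depth hf a := by omega
  simp only [h2]
  exact depth_spec hf a

open Classical in
lemma fwdF_bwdG (hf : Rooted b f) (a : V) : fwdF (bwdG hf a) = f := by
  funext v
  set g := bwdG hf a with hg
  by_cases h : ∃ i : Fin (pm g), chain g i = v ∧ (i : ℕ) + 1 < pm g
  · rw [fwdF, dif_pos h, chain_bwdG]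
    show f^[(h.choose : ℕ) + 1] a = f v
    rw [Function.iterate_succ_apply', ← chain_bwdG hf a h.choose, h.choose_spec.1]
  · by_cases hper : Per g v
    · -- v is the root b
      have hvs : v ∈ spine hf a := by rw [← perSet_bwdG hf a]; exact mem_perSet.mpr hper
      obtain ⟨k, hk, hkv⟩ := mem_spine'.mp hvs
      have hkd : k = depth hf a := by
        by_contra hne
        apply h
        have hklt : k + 1 < pm g := by
          have hpm : pm g = depth hf a + 1 := pm_bwdG hf a
          omega
        refine ⟨⟨k, by omega⟩, ?_, hklt⟩
        rw [chain_bwdG]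
        exact hkv
      have hvb : v = b := by rw [← hkv, hkd]; exact depth_spec hf a
      rw [fwdF, dif_neg h, if_pos hper, hvb, hf.1]
    · have hvs : v ∉ spine hf a := by
        rw [← perSet_bwdG hf a]
        intro hmem
        exact hper (mem_perSet.mp hmem)
      rw [fwdF_nonper hper, hg, bwdG_nonmem hf a hvs]

lemma fwdF_iterate_fwdA (g : V → V) {k : ℕ} (hk : k ≤ pm g - 1) :
    (fwdF g)^[k] (fwdA g) = chain g ⟨k, by have := pm_pos g; omega⟩ := by
  have := fwdF_chain_iterate g k ⟨0, pm_pos g⟩ (by simpa using hk)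
  rw [fwdA, this]
  congr 1
  apply Fin.ext
  simp

lemma depth_fwdA (g : V → V) : depth (rooted_fwdF g) (fwdA g) = pm g - 1 := by
  apply depth_eq_of
  · rw [fwdF_iterate_fwdA g le_rfl]
    rfl
  · intro j hj
    rw [fwdF_iterate_fwdA g (by omega)]
    intro hcon
    have := chain_inj hcon
    rw [Fin.mk.injEq] at this
    omega

lemma spine_fwdF (g : V → V) : spine (rooted_fwdF g) (fwdA g) = perSet g := by
  have hsub : spine (rooted_fwdF g) (fwdA g) ⊆ perSet g := by
    intro v hv
    obtain ⟨k, hk, hkv⟩ := mem_spine'.mp hv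
    rw [depth_fwdA] at hk
    rw [← hkv, fwdF_iterate_fwdA g hk]
    exact chain_mem _
  apply Finset.eq_of_subset_of_card_le hsub
  rw [card_spine, depth_fwdA]
  have := pm_pos g
  show pm g ≤ pm g - 1 + 1
  omega

open Classical in
lemma bwdG_fwdF (g : V → V) : bwdG (rooted_fwdF g) (fwdA g) = g := by
  funext v
  set hf := rooted_fwdF g
  set a := fwdA g
  by_cases hv : v ∈ spine hf a
  · rw [bwdG, dif_pos hv]
    set j := (spIso hf a).symm ⟨v, hv⟩ with hjdef
    have hjv : ((spIso hf a j : _) : V) = v := by rw [hjdef, OrderIso.apply_symm_apply]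
    have hjle : (j : ℕ) ≤ pm g - 1 := by
      have hd : depth hf a = pm g - 1 := depth_fwdA g
      have := j.2
      omega
    have hjlt : (j : ℕ) < pm g := by have := pm_pos g; omega
    rw [fwdF_iterate_fwdA g hjle]
    -- identify the chain index with the sorted index of v in perSet g
    have hvper : v ∈ perSet g := by rw [← spine_fwdF g]; exact hv
    set i := (sortIso g).symm ⟨v, hvper⟩ with hidef
    have hiv : ((sortIso g i : _) : V) = v := by rw [hidef, OrderIso.apply_symm_apply]
    have heq : ((sortIso g ⟨(j : ℕ), hjlt⟩ : _) : V) = ((spIso hf a j : _) : V) :=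
      orderIsoOfFin_congr (spine_fwdF g).symm rfl
    have hij : (⟨(j : ℕ), hjlt⟩ : Fin (pm g)) = i := by
      apply (sortIso g).injective
      apply Subtype.ext
      rw [heq, hjv, hiv]
    rw [hij]
    show chain g i = g v
    rw [chain, hiv]
  · rw [bwdG_nonmem hf a hv]
    have hnper : ¬ Per g v := by
      rw [← mem_perSet, ← spine_fwdF g]
      exact hv
    exact fwdF_nonper hnper

end Joyal3

----------------------------------------------------------------
-- Stage 6 : packaging and counting
----------------------------------------------------------------

section Count

variable {V : Type*} [Fintype V] [LinearOrder V]

/-- Joyal's bijection: endofunctions correspond to doubly-marked tree functions. -/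
noncomputable def joyalEquiv (V : Type*) [Fintype V] [LinearOrder V] [Nonempty V] :
    (V → V) ≃ {p : V × V × (V → V) // Rooted p.2.1 p.2.2} where
  toFun g := ⟨(fwdA g, fwdB g, fwdF g), rooted_fwdF g⟩
  invFun p := bwdG p.2 p.1.1
  left_inv g := bwdG_fwdF g
  right_inv := by
    rintro ⟨⟨a, b, f⟩, hf⟩
    apply Subtype.ext
    show (fwdA (bwdG hf a), fwdB (bwdG hf a), fwdF (bwdG hf a)) = (a, b, f)
    rw [fwdA_bwdG hf a, fwdB_bwdG hf a, fwdF_bwdG hf a]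

lemma rooted_conj (π : Equiv.Perm V) {b : V} {f : V → V} (hf : Rooted b f) :
    Rooted (π b) (π ∘ f ∘ π.symm) := by
  have hiter : ∀ (k : ℕ) (v : V), (π ∘ f ∘ π.symm)^[k] v = π (f^[k] (π.symm v)) := by
    intro k
    induction k with
    | zero => intro v; simp
    | succ k ih =>
      intro v
      rw [Function.iterate_succ_apply', ih, Function.iterate_succ_apply']
      simp
  constructor
  · show π (f (π.symm (π b))) = π b
    rw [Equiv.symm_apply_apply, hf.1]
  · intro v
    obtain ⟨k, hk⟩ := hf.2 (π.symm v)
    exact ⟨k, by rw [hiter, hk]⟩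

/-- conjugation moves the root of rooted functions. -/
noncomputable def rootedConjEquiv (π : Equiv.Perm V) (b : V) :
    {f : V → V // Rooted b f} ≃ {f : V → V // Rooted (π b) f} where
  toFun f := ⟨π ∘ f.1 ∘ π.symm, rooted_conj π f.2⟩
  invFun f := ⟨π.symm ∘ f.1 ∘ π, by
    have := rooted_conj π.symm f.2
    simpa using this⟩
  left_inv f := by
    apply Subtype.ext
    funext v
    simp
  right_inv f := by
    apply Subtype.ext
    funext v
    simp

/-- all roots give the same number of rooted functions. -/
noncomputable def rootedRootEquiv (b r : V) :
    {f : V → V // Rooted b f} ≃ {f : V → V // Rooted r f} := by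
  have h : Equiv.swap b r b = r := Equiv.swap_apply_left b r
  exact (rootedConjEquiv (Equiv.swap b r) b).trans (Equiv.cast (by rw [h]))

/-- the master bijection. -/
noncomputable def countEquiv (V : Type*) [Fintype V] [LinearOrder V] [Nonempty V] (r : V) :
    (V → V) ≃ V × V × {f : V → V // Rooted r f} :=
  (joyalEquiv V).trans <|
    ((Equiv.subtypeProdEquivSigmaSubtype (fun (a : V) (q : V × (V → V)) => Rooted q.1 q.2)).trans
      ((Equiv.sigmaEquivProd _ _))).trans <|
    (Equiv.prodCongr (Equiv.refl V)
      (((Equiv.subtypeProdEquivSigmaSubtype (fun (b : V) (f : V → V) => Rooted b f)).trans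
        (Equiv.sigmaCongrRight (fun b => rootedRootEquiv b r))).trans
        (Equiv.sigmaEquivProd _ _)))

lemma card_rooted (V : Type*) [Fintype V] [LinearOrder V] [Nonempty V] (r : V) :
    Fintype.card V * (Fintype.card V * Nat.card {f : V → V // Rooted r f})
      = Fintype.card V ^ Fintype.card V := by
  classical
  have h := Nat.card_congr (countEquiv V r)
  rw [Nat.card_prod, Nat.card_prod] at h
  rw [show (Nat.card V) = Fintype.card V from Nat.card_eq_fintype_card,
    show Nat.card (V → V) = Fintype.card V ^ Fintype.card V from by
      rw [Nat.card_eq_fintype_card, Fintype.card_fun]] at h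
  exact h.symm

end Count

end CayleyAux

/-- Cayley's formula: the number of trees on `n` labeled vertices is `n^(n-2)`
for every integer `n ≥ 2`. A tree on `{1,...,n}` is a connected acyclic
simple graph on these `n` labeled vertices. -/
theorem cayley_formula (n : ℕ) (hn : 2 ≤ n) :
    Nat.card {G : SimpleGraph (Fin n) // G.IsTree} = n ^ (n - 2) := by
  haveI : Nonempty (Fin n) := ⟨⟨0, by omega⟩⟩
  set r : Fin n := ⟨0, by omega⟩ with hr
  have h1 : Nat.card {G : SimpleGraph (Fin n) // G.IsTree}
      = Nat.card {f : Fin n → Fin n // CayleyAux.Rooted r f} :=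
    Nat.card_congr (CayleyAux.treeEquiv r)
  have h2 := CayleyAux.card_rooted (Fin n) r
  rw [Fintype.card_fin] at h2
  have h3 : n ^ n = n ^ 2 * n ^ (n - 2) := by
    rw [← pow_add]
    congr 1
    omega
  have h4 : n * (n * Nat.card {f : Fin n → Fin n // CayleyAux.Rooted r f})
      = n ^ 2 * Nat.card {f : Fin n → Fin n // CayleyAux.Rooted r f} := by ring
  rw [h4, h3] at h2
  have h5 : 0 < n ^ 2 := by positivity
  have h6 := Nat.eq_of_mul_eq_mul_left h5 h2
  rw [h1, h6]
end

section
/- The Borel(1) probabilities sum to one: ∑_{k=1}^∞ e^{-k} k^{k-1} / k! = 1. -/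
open Real

section BorelAux

open Finset Stirling

lemma fin_diff_pow (n : ℕ) : ∀ j : ℕ, j < n →
    ∑ k ∈ range (n+1), (-1:ℝ)^k * (n.choose k) * (k:ℝ)^j = 0 := by
  induction n with
  | zero => intro j hj; omega
  | succ n ih =>
    intro j hj
    have hj' : j ≤ n := by omega
    set A : ℝ := ∑ k ∈ range (n+1), (-1:ℝ)^k * (n.choose k) * (k:ℝ)^j with hA
    have hD : ∑ k ∈ range (n+2), (-1:ℝ)^k * (n.choose k) * (k:ℝ)^j = A := by
      rw [Finset.sum_range_succ, hA]
      simp [Nat.choose_eq_zero_of_lt (by omega : n < n+1)]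
    rw [Finset.sum_range_succ'] at hD
    -- hD : ∑ k ∈ range (n+1), (-1)^(k+1) * C(n,k+1) * (k+1)^j + (0-term) = A
    have hB : ∑ k ∈ range (n+1), (-1:ℝ)^k * (n.choose k) * ((k:ℝ)+1)^j = A := by
      have expand : ∀ k : ℕ, ((k:ℝ)+1)^j = ∑ i ∈ range (j+1), (j.choose i) * (k:ℝ)^i := by
        intro k
        rw [add_pow]
        exact Finset.sum_congr rfl fun i hi => by ring
      calc ∑ k ∈ range (n+1), (-1:ℝ)^k * (n.choose k) * ((k:ℝ)+1)^j
          = ∑ k ∈ range (n+1), ∑ i ∈ range (j+1),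
              (j.choose i) * ((-1:ℝ)^k * (n.choose k) * (k:ℝ)^i) := by
            refine Finset.sum_congr rfl fun k _ => ?_
            rw [expand, Finset.mul_sum]
            exact Finset.sum_congr rfl fun i _ => by ring
        _ = ∑ i ∈ range (j+1), (j.choose i : ℝ) *
              ∑ k ∈ range (n+1), ((-1:ℝ)^k * (n.choose k) * (k:ℝ)^i) := by
            rw [Finset.sum_comm]
            exact Finset.sum_congr rfl fun i _ => by rw [Finset.mul_sum]
        _ = A := by
            rw [Finset.sum_range_succ]
            have h0 : ∀ i ∈ range j, (j.choose i : ℝ) *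
                ∑ k ∈ range (n+1), ((-1:ℝ)^k * (n.choose k) * (k:ℝ)^i) = 0 := by
              intro i hi
              rw [ih i (by have := Finset.mem_range.mp hi; omega), mul_zero]
            rw [Finset.sum_eq_zero h0, Nat.choose_self]
            simp [hA]
    have hD' : ∑ k ∈ range (n+1), (-1:ℝ)^(k+1) * (n.choose (k+1)) * ((k:ℝ)+1)^j
        = A - (0:ℝ)^j := by
      have e : ∑ k ∈ range (n+1), (-1:ℝ)^(k+1) * ((n.choose (k+1):ℕ):ℝ) * ((k:ℝ)+1)^j
          = ∑ k ∈ range (n+1), (-1:ℝ)^(k+1) * ((n.choose (k+1):ℕ):ℝ) * (((k+1:ℕ)):ℝ)^j :=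
        Finset.sum_congr rfl fun k _ => by push_cast; ring
      rw [e]
      simp only [pow_zero, Nat.choose_zero_right, Nat.cast_one, one_mul, Nat.cast_zero,
        Nat.cast_ofNat] at hD
      linarith [hD]
    rw [Finset.sum_range_succ']
    have e2 : ∀ k ∈ range (n+1), (-1:ℝ)^(k+1) * (((n+1).choose (k+1) : ℕ) : ℝ) * (((k+1:ℕ)):ℝ)^j
        = -((-1:ℝ)^k * (n.choose k) * ((k:ℝ)+1)^j)
          + (-1:ℝ)^(k+1) * (n.choose (k+1)) * ((k:ℝ)+1)^j := by
      intro k _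
      rw [Nat.choose_succ_succ]
      push_cast
      ring
    rw [Finset.sum_congr rfl e2, Finset.sum_add_distrib, Finset.sum_neg_distrib, hB, hD']
    ring_nf
    simp

lemma abel_identity (m : ℕ) (hm : 1 ≤ m) : ∀ y : ℝ,
    ∑ k ∈ Icc 1 m, (m.choose k : ℝ) * (k:ℝ)^(k-1) * (y + m - k)^(m-k)
      = m * (y + m)^(m-1) := by
  induction m, hm using Nat.le_induction with
  | base => intro y; simp
  | succ n hn ih =>
    intro y
    set G : ℝ → ℝ := fun y => ∑ k ∈ Icc 1 (n+1),
      ((n+1).choose k : ℝ) * (k:ℝ)^(k-1) * (y + (n+1:ℕ) - k)^(n+1-k) with hG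
    set H : ℝ → ℝ := fun y => ((n+1:ℕ):ℝ) * (y + (n+1:ℕ))^(n+1-1) with hH
    have hderivG : ∀ y : ℝ, HasDerivAt G
        (∑ k ∈ Icc 1 (n+1), ((n+1).choose k : ℝ) * (k:ℝ)^(k-1) *
          (((n+1-k:ℕ):ℝ) * (y + (n+1:ℕ) - k)^(n+1-k-1))) y := by
      intro y
      apply HasDerivAt.fun_sum
      intro k hk
      have h1 : HasDerivAt (fun y : ℝ => (y + ((n+1:ℕ):ℝ) - (k:ℝ))^(n+1-k))
          (((n+1-k:ℕ):ℝ) * (y + ((n+1:ℕ):ℝ) - (k:ℝ))^(n+1-k-1) * 1) y := by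
        have h0 : HasDerivAt (fun y : ℝ => y + ((n+1:ℕ):ℝ) - (k:ℝ)) 1 y := by
          simpa using ((hasDerivAt_id y).add_const (((n+1:ℕ):ℝ))).sub_const (k:ℝ)
        exact h0.pow _
      have := h1.const_mul (((n+1).choose k : ℝ) * (k:ℝ)^(k-1))
      simpa [mul_assoc, mul_comm, mul_left_comm] using this
    have hderiv_eq : ∀ y : ℝ,
        (∑ k ∈ Icc 1 (n+1), ((n+1).choose k : ℝ) * (k:ℝ)^(k-1) *
          (((n+1-k:ℕ):ℝ) * (y + (n+1:ℕ) - k)^(n+1-k-1)))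
        = ((n+1:ℕ):ℝ) * (((n:ℕ):ℝ) * (y + (n+1:ℕ))^(n-1)) := by
      intro y
      rw [Finset.sum_Icc_succ_top (by omega : 1 ≤ n+1)]
      have hlast : ((n+1).choose (n+1) : ℝ) * ((n+1:ℕ):ℝ)^(n+1-1) *
          (((n+1-(n+1):ℕ):ℝ) * (y + (n+1:ℕ) - (n+1:ℕ))^(n+1-(n+1)-1)) = 0 := by
        simp
      rw [hlast, add_zero]
      have hterm : ∀ k ∈ Icc 1 n, ((n+1).choose k : ℝ) * (k:ℝ)^(k-1) *
            (((n+1-k:ℕ):ℝ) * (y + (n+1:ℕ) - k)^(n+1-k-1))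
          = ((n+1:ℕ):ℝ) * ((n.choose k : ℝ) * (k:ℝ)^(k-1) * ((y+1) + (n:ℕ) - k)^(n-k)) := by
        intro k hk
        obtain ⟨hk1, hk2⟩ := Finset.mem_Icc.mp hk
        have hchoose : (n.choose k) * (n + 1) = ((n + 1).choose k) * (n + 1 - k) :=
          Nat.choose_mul_succ_eq n k
        have hcast : ((n+1).choose k : ℝ) * ((n+1-k:ℕ):ℝ) = ((n:ℝ)+1) * (n.choose k : ℝ) := by
          have := congrArg (fun z : ℕ => (z : ℝ)) hchoose
          push_cast at this
          linarith [this]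
        have hexp : n+1-k-1 = n-k := by omega
        have hbase : y + ((n+1:ℕ):ℝ) - k = (y+1) + (n:ℕ) - k := by push_cast; ring
        rw [hexp, hbase]
        push_cast
        push_cast at hcast
        linear_combination ((k:ℝ)^(k-1) * ((y+1) + (n:ℝ) - k)^(n-k)) * hcast
      rw [Finset.sum_congr rfl hterm, ← Finset.mul_sum, ih (y+1)]
      push_cast
      ring_nf
    have hderivH : ∀ y : ℝ, HasDerivAt H
        (((n+1:ℕ):ℝ) * (((n:ℕ):ℝ) * (y + ((n+1:ℕ):ℝ))^(n-1))) y := by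
      intro y
      have h0 : HasDerivAt (fun y : ℝ => y + ((n+1:ℕ):ℝ)) 1 y :=
        (hasDerivAt_id y).add_const _
      have := (h0.pow (n+1-1)).const_mul ((n+1:ℕ):ℝ)
      have hexp : n+1-1 = n := by omega
      simpa [hH, hexp, mul_assoc] using this
    have hF : ∀ y : ℝ, HasDerivAt (fun y => G y - H y) 0 y := by
      intro y
      have := (hderivG y).sub (hderivH y)
      rwa [hderiv_eq y, sub_self] at this
    have hconst : G y - H y = G (-((n+1:ℕ):ℝ)) - H (-((n+1:ℕ):ℝ)) :=
      is_const_of_deriv_eq_zero (fun y => (hF y).differentiableAt)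
        (fun y => (hF y).deriv) _ _
    have hG0 : G (-((n+1:ℕ):ℝ)) = 0 := by
      simp only [hG]
      have hterm : ∀ k ∈ Icc 1 (n+1), ((n+1).choose k : ℝ) * (k:ℝ)^(k-1) *
          ((-((n+1:ℕ):ℝ)) + (n+1:ℕ) - k)^(n+1-k)
          = (-1:ℝ)^(n+1) * ((-1:ℝ)^k * ((n+1).choose k : ℝ) * (k:ℝ)^n) := by
        intro k hk
        obtain ⟨hk1, hk2⟩ := Finset.mem_Icc.mp hk
        have hbase : (-((n+1:ℕ):ℝ)) + (n+1:ℕ) - k = -(k:ℝ) := by push_cast; ring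
        rw [hbase, neg_pow]
        have hpow : (k:ℝ)^(k-1) * (k:ℝ)^(n+1-k) = (k:ℝ)^n := by
          rw [← pow_add]
          congr 1
          omega
        have hsign : (-1:ℝ)^(n+1-k) * (-1:ℝ)^k = (-1:ℝ)^(n+1) := by
          rw [← pow_add]
          congr 1
          omega
        have hsign' : (-1:ℝ)^(n+1-k) = (-1:ℝ)^(n+1) * (-1:ℝ)^k := by
          have hb : (-1:ℝ)^k * (-1:ℝ)^k = 1 := by
            rw [← pow_add]
            exact Even.neg_one_pow ⟨k, rfl⟩
          calc (-1:ℝ)^(n+1-k) = (-1:ℝ)^(n+1-k) * ((-1:ℝ)^k * (-1:ℝ)^k) := by rw [hb, mul_one]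
            _ = ((-1:ℝ)^(n+1-k) * (-1:ℝ)^k) * (-1:ℝ)^k := by ring
            _ = (-1:ℝ)^(n+1) * (-1:ℝ)^k := by rw [hsign]
        rw [hsign']
        linear_combination ((n+1).choose k : ℝ) * (-1:ℝ)^(n+1) * (-1:ℝ)^k * hpow
      rw [Finset.sum_congr rfl hterm, ← Finset.mul_sum]
      have hfd := fin_diff_pow (n+1) n (by omega)
      have hsplit : ∑ k ∈ range (n+2), (-1:ℝ)^k * ((n+1).choose k) * (k:ℝ)^n
          = (-1:ℝ)^0 * ((n+1).choose 0 : ℝ) * ((0:ℕ):ℝ)^n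
            + ∑ k ∈ Icc 1 (n+1), (-1:ℝ)^k * ((n+1).choose k) * (k:ℝ)^n := by
        have : range (n+2) = insert 0 (Icc 1 (n+1)) := by
          ext x; simp [Finset.mem_range, Finset.mem_Icc]; omega
        rw [this, Finset.sum_insert (by simp)]
      rw [hfd] at hsplit
      have h0term : (-1:ℝ)^0 * ((n+1).choose 0 : ℝ) * ((0:ℕ):ℝ)^n = 0 := by
        simp [zero_pow (by omega : n ≠ 0)]
      rw [h0term, zero_add] at hsplit
      have : ∑ k ∈ Icc 1 (n+1), (-1:ℝ)^k * ((n+1).choose k : ℝ) * (k:ℝ)^n = 0 := by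
        linarith [hsplit]
      rw [this, mul_zero]
    have hH0 : H (-((n+1:ℕ):ℝ)) = 0 := by
      simp only [hH]
      have : (-((n+1:ℕ):ℝ)) + ((n+1:ℕ):ℝ) = 0 := by ring
      rw [this, zero_pow (by omega : n+1-1 ≠ 0), mul_zero]
    have : G y = H y := by
      have := hconst
      rw [hG0, hH0] at this
      linarith [this]
    exact this

noncomputable def borelB (k : ℕ) : ℝ := if k = 0 then 0 else (k:ℝ)^(k-1) / (k.factorial : ℝ)

lemma borelB_zero : borelB 0 = 0 := by simp [borelB]

lemma borelB_one : borelB 1 = 1 := by simp [borelB]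

lemma borelB_pos (k : ℕ) (hk : 1 ≤ k) : 0 < borelB k := by
  rw [borelB, if_neg (by omega)]
  positivity

lemma borelB_nonneg (k : ℕ) : 0 ≤ borelB k := by
  rcases Nat.eq_zero_or_pos k with h | h
  · simp [h, borelB_zero]
  · exact (borelB_pos k h).le

lemma abel_sum' (n : ℕ) (hn : 1 ≤ n) :
    ∑ k ∈ Icc 1 n, (n.choose k : ℝ) * (k:ℝ)^(k-1) * ((n-k:ℕ):ℝ)^(n-k) = (n:ℝ)^n := by
  have h := abel_identity n hn 0
  have hterm : ∀ k ∈ Icc 1 n, (n.choose k : ℝ) * (k:ℝ)^(k-1) * ((0:ℝ) + n - k)^(n-k)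
      = (n.choose k : ℝ) * (k:ℝ)^(k-1) * ((n-k:ℕ):ℝ)^(n-k) := by
    intro k hk
    obtain ⟨hk1, hk2⟩ := Finset.mem_Icc.mp hk
    rw [show ((0:ℝ) + n - k) = ((n-k:ℕ):ℝ) by rw [Nat.cast_sub hk2]; ring]
  rw [Finset.sum_congr rfl hterm] at h
  rw [h, zero_add, ← pow_succ']
  congr 1
  omega

lemma conv_identity (n : ℕ) :
    ∑ k ∈ range (n+1), (k:ℝ) * borelB k * borelB (n-k) = ((n:ℝ)-1) * borelB n := by
  by_cases hn : n < 2
  · interval_cases n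
    · simp [borelB]
    · rw [Finset.sum_range_succ, Finset.sum_range_one]
      simp [borelB]
  push_neg at hn
  -- reflect the sum
  have hrefl : ∑ k ∈ range (n+1), (k:ℝ) * borelB k * borelB (n-k)
      = ∑ k ∈ range (n+1), ((n-k:ℕ):ℝ) * borelB (n-k) * borelB k := by
    rw [← Finset.sum_range_reflect (fun k => (k:ℝ) * borelB k * borelB (n-k)) (n+1)]
    refine Finset.sum_congr rfl fun k hk => ?_
    have hk' : k ≤ n := by have := Finset.mem_range.mp hk; omega
    rw [show n+1-1-k = n-k by omega, show n-(n-k) = k by omega]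
  rw [hrefl]
  -- restrict to Icc 1 (n-1)
  have hset : range (n+1) = insert 0 (insert n (Icc 1 (n-1))) := by
    ext x; simp [Finset.mem_range, Finset.mem_Icc]; omega
  have hsum : ∑ k ∈ range (n+1), ((n-k:ℕ):ℝ) * borelB (n-k) * borelB k
      = ∑ k ∈ Icc 1 (n-1), ((n-k:ℕ):ℝ) * borelB (n-k) * borelB k := by
    rw [hset, Finset.sum_insert (by simp; omega), Finset.sum_insert (by simp; omega)]
    simp [borelB_zero]
  rw [hsum]
  -- multiply by n!
  have hfact : (n.factorial : ℝ) ≠ 0 := Nat.cast_ne_zero.mpr n.factorial_ne_zero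
  have key : (n.factorial : ℝ) * ∑ k ∈ Icc 1 (n-1), ((n-k:ℕ):ℝ) * borelB (n-k) * borelB k
      = (n:ℝ)^n - (n:ℝ)^(n-1) := by
    have habel := abel_sum' n (by omega)
    have hsplit : ∑ k ∈ Icc 1 n, (n.choose k : ℝ) * (k:ℝ)^(k-1) * ((n-k:ℕ):ℝ)^(n-k)
        = ∑ k ∈ Icc 1 (n-1), (n.choose k : ℝ) * (k:ℝ)^(k-1) * ((n-k:ℕ):ℝ)^(n-k)
          + (n:ℝ)^(n-1) := by
      rw [show n = (n-1)+1 by omega, Finset.sum_Icc_succ_top (by omega)]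
      rw [show (n-1)+1 = n by omega]
      congr 1
      simp [Nat.choose_self]
    rw [hsplit] at habel
    rw [Finset.mul_sum]
    have hterm : ∀ k ∈ Icc 1 (n-1),
        (n.factorial : ℝ) * (((n-k:ℕ):ℝ) * borelB (n-k) * borelB k)
        = (n.choose k : ℝ) * (k:ℝ)^(k-1) * ((n-k:ℕ):ℝ)^(n-k) := by
      intro k hk
      obtain ⟨hk1, hk2⟩ := Finset.mem_Icc.mp hk
      have h1 : 1 ≤ n - k := by omega
      have h2 : k ≤ n := by omega
      rw [borelB, if_neg (by omega), borelB, if_neg (by omega)]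
      have hchoose : (n.choose k : ℝ) = (n.factorial : ℝ) / ((k.factorial : ℝ) * ((n-k).factorial : ℝ)) := by
        rw [Nat.choose_eq_factorial_div_factorial h2]
        rw [Nat.cast_div (Nat.factorial_mul_factorial_dvd_factorial h2)
          (by positivity)]
        push_cast
        ring
      rw [hchoose]
      have hp : ((n-k:ℕ):ℝ) * ((n-k:ℕ):ℝ)^(n-k-1) = ((n-k:ℕ):ℝ)^(n-k) := by
        rw [← pow_succ']
        congr 1
        omega
      have hc : ((n:ℝ) - k) = ((n-k:ℕ):ℝ) := by rw [Nat.cast_sub h2]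
      field_simp
      exact hp
    rw [Finset.sum_congr rfl hterm]
    linarith [habel]
  -- conclude
  have hbn : borelB n = (n:ℝ)^(n-1) / (n.factorial : ℝ) := by
    rw [borelB, if_neg (by omega)]
  have hnn : (n:ℝ)^n = (n:ℝ) * (n:ℝ)^(n-1) := by
    rw [← pow_succ']
    congr 1
    omega
  have := key
  rw [hbn]
  field_simp at this ⊢
  nlinarith [this, hnn]

lemma factorial_lower (n : ℕ) (hn : 1 ≤ n) :
    Real.sqrt (2*n) * ((n:ℝ) / Real.exp 1)^n ≤ (n.factorial : ℝ) := by
  have h1 : (1:ℝ) ≤ stirlingSeq n := by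
    have h2 : Real.sqrt π ≤ stirlingSeq n := by
      obtain ⟨m, rfl⟩ : ∃ m, n = m + 1 := ⟨n - 1, by omega⟩
      have := Stirling.stirlingSeq'_antitone
      have hlim := Stirling.tendsto_stirlingSeq_sqrt_pi
      have : Real.sqrt π ≤ (stirlingSeq ∘ Nat.succ) m :=
        Stirling.stirlingSeq'_antitone.le_of_tendsto
          (hlim.comp (Filter.tendsto_add_atTop_nat 1)) m
      simpa using this
    refine le_trans ?_ h2
    rw [show (1:ℝ) = Real.sqrt 1 by simp]
    exact Real.sqrt_le_sqrt (by linarith [Real.pi_gt_three])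
  have hpos : 0 < Real.sqrt (2*n) * ((n:ℝ) / Real.exp 1)^n := by
    have : (0:ℝ) < n := by exact_mod_cast hn
    positivity
  have := (le_div_iff₀ hpos).mp (by simpa [stirlingSeq] using h1)
  linarith [this]

lemma borelB_le (n : ℕ) (hn : 1 ≤ n) :
    borelB n ≤ Real.exp 1 ^ n / ((n:ℝ) * Real.sqrt n) := by
  have hnp : (0:ℝ) < n := by exact_mod_cast hn
  have hf := factorial_lower n hn
  have hfac : (0:ℝ) < n.factorial := by positivity
  rw [borelB, if_neg (by omega)]
  have hsq : Real.sqrt (n:ℝ) ≤ Real.sqrt (2*n) := Real.sqrt_le_sqrt (by linarith)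
  have hlow : Real.sqrt (n:ℝ) * ((n:ℝ) / Real.exp 1)^n ≤ (n.factorial : ℝ) := by
    refine le_trans ?_ hf
    have : (0:ℝ) ≤ ((n:ℝ) / Real.exp 1)^n := by positivity
    nlinarith [hsq, this]
  rw [div_le_div_iff₀ hfac (by positivity)]
  have hexp : ((n:ℝ)/Real.exp 1)^n = (n:ℝ)^n / Real.exp 1 ^n := div_pow _ _ _
  have hnn : (n:ℝ)^(n-1) * (n:ℝ) = (n:ℝ)^n := by
    rw [← pow_succ]; congr 1; omega
  calc (n:ℝ)^(n-1) * ((n:ℝ) * Real.sqrt n) = Real.sqrt n * ((n:ℝ)^n) := by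
        rw [← hnn]; ring
    _ = Real.sqrt n * ((n:ℝ)/Real.exp 1)^n * Real.exp 1 ^ n := by
        rw [hexp]; field_simp
    _ ≤ (n.factorial:ℝ) * Real.exp 1 ^n := by
        have : (0:ℝ) < Real.exp 1 ^ n := by positivity
        nlinarith [hlow, this]
    _ = Real.exp 1 ^ n * (n.factorial:ℝ) := by ring

lemma summable_aux : Summable (fun n : ℕ => 1 / ((n:ℝ) * Real.sqrt n)) := by
  have h : ∀ n : ℕ, 1 / ((n:ℝ) * Real.sqrt n) = ((n:ℝ) ^ ((-3:ℝ)/2)) := by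
    intro n
    rcases Nat.eq_zero_or_pos n with h | h
    · subst h
      rw [Nat.cast_zero, Real.zero_rpow (by norm_num)]
      simp
    · have hnp : (0:ℝ) < n := by exact_mod_cast h
      rw [show ((-3:ℝ)/2) = -(1 + 1/2) by norm_num, Real.rpow_neg hnp.le,
        Real.rpow_add hnp, Real.rpow_one, ← Real.sqrt_eq_rpow, one_div]
  refine Summable.congr ?_ (fun n => (h n).symm)
  exact Real.summable_nat_rpow.mpr (by norm_num)

lemma summable_borelB_mul (x : ℝ) (hx : |x| ≤ Real.exp (-1)) :
    Summable (fun n : ℕ => borelB n * x ^ n) := by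
  refine Summable.of_norm_bounded summable_aux ?_
  intro n
  rcases Nat.eq_zero_or_pos n with h | h
  · subst h; simp [borelB_zero]
  have hb := borelB_nonneg n
  have hxe : |x|^n ≤ Real.exp (-1) ^ n := pow_le_pow_left₀ (abs_nonneg x) hx n
  have h2 : ‖borelB n * x^n‖ ≤ borelB n * Real.exp (-1)^n := by
    rw [norm_mul, norm_pow, Real.norm_eq_abs, Real.norm_eq_abs, abs_of_nonneg hb]
    exact mul_le_mul_of_nonneg_left hxe hb
  refine h2.trans ?_
  have hble := borelB_le n h
  have hkey : borelB n * Real.exp (-1)^n ≤ (Real.exp 1^n / ((n:ℝ)*Real.sqrt n)) * Real.exp (-1)^n := by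
    have : (0:ℝ) ≤ Real.exp (-1)^n := by positivity
    exact mul_le_mul_of_nonneg_right hble this
  refine hkey.trans ?_
  have hee : Real.exp 1 ^n * Real.exp (-1)^n = 1 := by
    rw [← mul_pow, ← Real.exp_add]
    norm_num
  have hnp : (0:ℝ) < n := by exact_mod_cast h
  have : Real.exp 1^n / ((n:ℝ)*Real.sqrt n) * Real.exp (-1)^n
      = (Real.exp 1^n * Real.exp (-1)^n) / ((n:ℝ)*Real.sqrt n) := by ring
  rw [this, hee]

noncomputable def borelF (x : ℝ) : ℝ := ∑' n, borelB n * x^n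

lemma summable_deriv_bound (r : ℝ) (hr0 : 0 < r) (hr : r < Real.exp (-1)) :
    Summable (fun n : ℕ => (n:ℝ) * borelB n * r^(n-1)) := by
  set c : ℝ := Real.exp 1 * r with hc
  have hc0 : 0 < c := by positivity
  have hc1 : c < 1 := by
    have : Real.exp 1 * r < Real.exp 1 * Real.exp (-1) := by
      exact mul_lt_mul_of_pos_left hr (Real.exp_pos 1)
    rwa [← Real.exp_add, add_neg_cancel, Real.exp_zero] at this
  have hgeo : Summable (fun n : ℕ => (1/r) * c^n) :=
    (summable_geometric_of_lt_one hc0.le hc1).mul_left _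
  refine Summable.of_nonneg_of_le (fun n => mul_nonneg (mul_nonneg (Nat.cast_nonneg n)
    (borelB_nonneg n)) (pow_nonneg hr0.le _)) (fun n => ?_) hgeo
  rcases Nat.eq_zero_or_pos n with h | h
  · subst h
    simpa using (div_pos one_pos hr0).le
  have hnp : (0:ℝ) < n := by exact_mod_cast h
  have hble := borelB_le n h
  have hsq : 1 ≤ Real.sqrt n := by
    rw [show (1:ℝ) = Real.sqrt 1 by simp]
    exact Real.sqrt_le_sqrt (by exact_mod_cast h)
  have h1 : (n:ℝ) * borelB n ≤ Real.exp 1 ^ n := by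
    refine (mul_le_mul_of_nonneg_left hble hnp.le).trans ?_
    rw [mul_div_assoc', div_le_iff₀ (mul_pos hnp (Real.sqrt_pos.mpr hnp))]
    have hh : (n:ℝ) * Real.exp 1^n * 1 ≤ (n:ℝ) * Real.exp 1^n * Real.sqrt n :=
      mul_le_mul_of_nonneg_left hsq (by positivity)
    nlinarith [hh]
  have h2 : (n:ℝ) * borelB n * r^(n-1) ≤ Real.exp 1^n * r^(n-1) :=
    mul_le_mul_of_nonneg_right h1 (by positivity)
  refine h2.trans ?_
  have : Real.exp 1 ^ n * r^(n-1) = (1/r) * c^n := by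
    rw [hc, mul_pow]
    have : r^(n-1) = r^n / r := by
      rw [eq_div_iff (ne_of_gt hr0), ← pow_succ]
      congr 1
      omega
    rw [this]
    field_simp
  rw [this]

lemma summable_nmul (x : ℝ) (hx : |x| < Real.exp (-1)) :
    Summable (fun n : ℕ => (n:ℝ) * borelB n * x^n) := by
  set r : ℝ := (|x| + Real.exp (-1))/2 with hrdef
  have hr0 : 0 < r := by have := abs_nonneg x; have := Real.exp_pos (-1); positivity
  have hxr : |x| < r := by rw [hrdef]; linarith
  have hre : r < Real.exp (-1) := by rw [hrdef]; linarith
  have hs := (summable_deriv_bound r hr0 hre).mul_right r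
  refine Summable.of_norm_bounded hs ?_
  intro n
  have hb := borelB_nonneg n
  have hn0 : (0:ℝ) ≤ n := Nat.cast_nonneg n
  rw [norm_mul, norm_mul, Real.norm_eq_abs, Real.norm_eq_abs, Real.norm_eq_abs,
    abs_of_nonneg hn0, abs_of_nonneg hb, abs_pow]
  have h1 : |x|^n ≤ r^n := pow_le_pow_left₀ (abs_nonneg x) hxr.le n
  have h2 : (n:ℝ) * borelB n * |x|^n ≤ (n:ℝ) * borelB n * r^n :=
    mul_le_mul_of_nonneg_left h1 (by positivity)
  refine h2.trans ?_
  rcases Nat.eq_zero_or_pos n with h | h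
  · subst h; simp
  have : r^n = r^(n-1) * r := by rw [← pow_succ]; congr 1; omega
  rw [this]
  exact le_of_eq (by ring)

lemma hasDerivAt_borelF (x : ℝ) (hx : |x| < Real.exp (-1)) :
    HasDerivAt borelF (∑' n, borelB n * ((n:ℝ) * x^(n-1))) x := by
  set r : ℝ := (|x| + Real.exp (-1))/2 with hrdef
  have hr0 : 0 < r := by
    have h1 := abs_nonneg x
    have h2 := Real.exp_pos (-1)
    rw [hrdef]; positivity
  have hxr : |x| < r := by rw [hrdef]; linarith
  have hre : r < Real.exp (-1) := by rw [hrdef]; linarith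
  have hu : Summable (fun n : ℕ => borelB n * ((n:ℝ) * r^(n-1))) := by
    refine (summable_deriv_bound r hr0 hre).congr fun n => by ring
  refine hasDerivAt_tsum_of_isPreconnected hu isOpen_Ioo
    (convex_Ioo (-r) r).isPreconnected
    (fun n y _ => (hasDerivAt_pow n y).const_mul (borelB n))
    (fun n y hy => ?_) (by constructor <;> [linarith; linarith] :
      (0:ℝ) ∈ Set.Ioo (-r) r) ?_ ?_
  · have hyr : |y| ≤ r := by
      rw [abs_le]
      exact ⟨hy.1.le, hy.2.le⟩
    have hb := borelB_nonneg n
    rw [norm_mul, Real.norm_eq_abs, Real.norm_eq_abs, abs_of_nonneg hb, abs_mul,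
      abs_of_nonneg (Nat.cast_nonneg n : (0:ℝ) ≤ n), abs_pow]
    have h1 : |y|^(n-1) ≤ r^(n-1) := pow_le_pow_left₀ (abs_nonneg y) hyr _
    have : borelB n * ((n:ℝ) * |y|^(n-1)) ≤ borelB n * ((n:ℝ) * r^(n-1)) := by
      apply mul_le_mul_of_nonneg_left _ hb
      exact mul_le_mul_of_nonneg_left h1 (Nat.cast_nonneg n)
    exact this
  · exact summable_borelB_mul 0 (by simp; exact (Real.exp_pos (-1)).le)
  · constructor <;> [linarith [neg_abs_le x]; linarith [le_abs_self x]]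

lemma borelF_ode (x : ℝ) (hx : |x| < Real.exp (-1)) :
    x * (∑' n, borelB n * ((n:ℝ) * x^(n-1))) * (1 - borelF x) = borelF x := by
  have hxle : |x| ≤ Real.exp (-1) := hx.le
  have hf : Summable (fun n : ℕ => borelB n * x^n) := summable_borelB_mul x hxle
  have hu : Summable (fun n : ℕ => (n:ℝ) * borelB n * x^n) := summable_nmul x hx
  -- step A
  have hA : x * (∑' n, borelB n * ((n:ℝ) * x^(n-1))) = ∑' n : ℕ, (n:ℝ) * borelB n * x^n := by
    rw [← tsum_mul_left]
    refine tsum_congr fun n => ?_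
    cases n with
    | zero => simp
    | succ m =>
      have : x * x^m = x^(m+1) := (pow_succ x m).symm ▸ by ring
      calc x * (borelB (m+1) * (((m+1:ℕ):ℝ) * x^(m+1-1)))
          = ((m+1:ℕ):ℝ) * borelB (m+1) * (x * x^m) := by
            norm_num
            ring
        _ = ((m+1:ℕ):ℝ) * borelB (m+1) * x^(m+1) := by rw [this]
  -- step B : Cauchy product
  have hnormf : Summable (fun n : ℕ => ‖borelB n * x^n‖) := by
    refine hf.abs.congr fun n => ?_
    simp [Real.norm_eq_abs, abs_mul, abs_pow]
  have hnormu : Summable (fun n : ℕ => ‖(n:ℝ) * borelB n * x^n‖) := by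
    refine hu.abs.congr fun n => ?_
    simp [Real.norm_eq_abs, abs_mul, abs_pow]
  have hB : (∑' n : ℕ, (n:ℝ) * borelB n * x^n) * (∑' n, borelB n * x^n)
      = ∑' n : ℕ, (((n:ℝ)-1) * borelB n) * x^n := by
    rw [tsum_mul_tsum_eq_tsum_sum_antidiagonal_of_summable_norm hnormu hnormf]
    refine tsum_congr fun n => ?_
    rw [Finset.Nat.sum_antidiagonal_eq_sum_range_succ_mk]
    have hterm : ∀ k ∈ range (n+1),
        ((k:ℝ) * borelB k * x^k) * (borelB (n-k) * x^(n-k))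
        = ((k:ℝ) * borelB k * borelB (n-k)) * x^n := by
      intro k hk
      have hkn : k ≤ n := by have := Finset.mem_range.mp hk; omega
      have : x^k * x^(n-k) = x^n := by
        rw [← pow_add]
        congr 1
        omega
      calc ((k:ℝ) * borelB k * x^k) * (borelB (n-k) * x^(n-k))
          = ((k:ℝ) * borelB k * borelB (n-k)) * (x^k * x^(n-k)) := by ring
        _ = ((k:ℝ) * borelB k * borelB (n-k)) * x^n := by rw [this]
    rw [Finset.sum_congr rfl hterm, ← Finset.sum_mul, conv_identity n]
  -- step C
  have hC : ∑' n : ℕ, (((n:ℝ)-1) * borelB n) * x^n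
      = (∑' n : ℕ, (n:ℝ) * borelB n * x^n) - ∑' n, borelB n * x^n := by
    rw [← Summable.tsum_sub hu hf]
    exact tsum_congr fun n => by ring
  rw [hA]
  have hBC : (∑' n : ℕ, (n:ℝ) * borelB n * x^n) * borelF x
      = (∑' n : ℕ, (n:ℝ) * borelB n * x^n) - borelF x := by
    rw [show borelF x = ∑' n : ℕ, borelB n * x^n from rfl]
    exact hB.trans hC
  linear_combination -hBC

lemma summable_shift2 (x : ℝ) (hx0 : 0 ≤ x) (hx : x ≤ Real.exp (-1)) :
    Summable (fun n : ℕ => borelB (n+2) * x^n) := by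
  have h1 : Summable (fun n : ℕ => borelB (n+2) * Real.exp (-1)^n) := by
    have h2 := (summable_nat_add_iff 2).mpr (summable_borelB_mul (Real.exp (-1))
      (by rw [abs_of_pos (Real.exp_pos _)]))
    have h3 := h2.div_const (Real.exp (-1)^2)
    refine h3.congr fun n => ?_
    rw [pow_add]
    field_simp
  refine Summable.of_nonneg_of_le (fun n => mul_nonneg (borelB_nonneg _) (pow_nonneg hx0 _))
    (fun n => ?_) h1
  exact mul_le_mul_of_nonneg_left (pow_le_pow_left₀ hx0 hx n) (borelB_nonneg _)

lemma borelF_split (x : ℝ) (hx0 : 0 ≤ x) (hx : x ≤ Real.exp (-1)) :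
    borelF x = x + x^2 * ∑' n : ℕ, borelB (n+2) * x^n := by
  have hf : Summable (fun n : ℕ => borelB n * x^n) :=
    summable_borelB_mul x (by rwa [abs_of_nonneg hx0])
  have hf1 : Summable (fun n : ℕ => borelB (n+1) * x^(n+1)) :=
    (summable_nat_add_iff 1).mpr hf
  rw [borelF, Summable.tsum_eq_zero_add hf, Summable.tsum_eq_zero_add hf1]
  rw [borelB_zero, borelB_one]
  have : ∑' n : ℕ, borelB (n+1+1) * x^(n+1+1) = x^2 * ∑' n : ℕ, borelB (n+2) * x^n := by
    rw [← tsum_mul_left]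
    exact tsum_congr fun n => by ring
  rw [this]
  ring

lemma borelF_div_tendsto :
    Filter.Tendsto (fun x => borelF x / x) (nhdsWithin 0 (Set.Ioi 0)) (nhds 1) := by
  set K : ℝ := ∑' n : ℕ, borelB (n+2) * Real.exp (-1)^n with hK
  have hK0 : 0 ≤ K := tsum_nonneg fun n => mul_nonneg (borelB_nonneg _) (by positivity)
  have hbound : ∀ x ∈ Set.Ioo (0:ℝ) (Real.exp (-1)), 1 ≤ borelF x / x ∧ borelF x / x ≤ 1 + K * x := by
    intro x hx
    obtain ⟨hx0, hx1⟩ := hx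
    have hR : 0 ≤ ∑' n : ℕ, borelB (n+2) * x^n :=
      tsum_nonneg fun n => mul_nonneg (borelB_nonneg _) (by positivity)
    have hRK : ∑' n : ℕ, borelB (n+2) * x^n ≤ K := by
      refine (summable_shift2 x hx0.le hx1.le).tsum_le_tsum (fun n => ?_)
        (summable_shift2 _ (Real.exp_pos _).le le_rfl)
      exact mul_le_mul_of_nonneg_left (pow_le_pow_left₀ hx0.le hx1.le n) (borelB_nonneg _)
    have hsplit := borelF_split x hx0.le hx1.le
    constructor
    · rw [hsplit, le_div_iff₀ hx0]
      nlinarith [hR, sq_nonneg x]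
    · rw [hsplit, div_le_iff₀ hx0]
      nlinarith [hRK, sq_nonneg x, hx0]
  have hlow : ∀ᶠ x in nhdsWithin 0 (Set.Ioi 0), (1:ℝ) ≤ borelF x / x := by
    filter_upwards [Ioo_mem_nhdsGT_of_mem (Set.mem_Ico.mpr ⟨le_rfl, Real.exp_pos _⟩)] with x hx
    exact (hbound x hx).1
  have hupp : ∀ᶠ x in nhdsWithin 0 (Set.Ioi 0), borelF x / x ≤ 1 + K * x := by
    filter_upwards [Ioo_mem_nhdsGT_of_mem (Set.mem_Ico.mpr ⟨le_rfl, Real.exp_pos _⟩)] with x hx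
    exact (hbound x hx).2
  have hconst : Filter.Tendsto (fun _ : ℝ => (1:ℝ)) (nhdsWithin 0 (Set.Ioi 0)) (nhds 1) :=
    tendsto_const_nhds
  have hub : Filter.Tendsto (fun x : ℝ => 1 + K * x) (nhdsWithin 0 (Set.Ioi 0)) (nhds 1) := by
    have : Filter.Tendsto (fun x : ℝ => 1 + K * x) (nhds 0) (nhds (1 + K * 0)) := by
      exact (continuous_const.add (continuous_const.mul continuous_id)).tendsto 0
    rw [mul_zero, add_zero] at this
    exact this.mono_left nhdsWithin_le_nhds
  exact tendsto_of_tendsto_of_tendsto_of_le_of_le' hconst hub hlow hupp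

lemma borelF_tendsto_zero :
    Filter.Tendsto borelF (nhdsWithin 0 (Set.Ioi 0)) (nhds 0) := by
  have h1 : Filter.Tendsto (fun x : ℝ => (borelF x / x) * x) (nhdsWithin 0 (Set.Ioi 0)) (nhds 0) := by
    have h2 : Filter.Tendsto (fun x : ℝ => x) (nhdsWithin 0 (Set.Ioi 0)) (nhds 0) :=
      Filter.tendsto_id.mono_left nhdsWithin_le_nhds
    have := borelF_div_tendsto.mul h2
    rwa [mul_zero] at this
  refine (Filter.Tendsto.congr' ?_ h1)
  filter_upwards [self_mem_nhdsWithin] with x hx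
  rw [div_mul_cancel₀]
  exact ne_of_gt hx

lemma borelF_funeq (x : ℝ) (hx0 : 0 < x) (hx : x < Real.exp (-1)) :
    borelF x * Real.exp (-(borelF x)) = x := by
  set H : ℝ → ℝ := fun y => borelF y * Real.exp (-(borelF y)) / y with hHdef
  have hderiv : ∀ y ∈ Set.Ioo (0:ℝ) (Real.exp (-1)), HasDerivAt H 0 y := by
    intro y hy
    obtain ⟨hy0, hy1⟩ := hy
    have hyabs : |y| < Real.exp (-1) := by rwa [abs_of_pos hy0]
    have hF := hasDerivAt_borelF y hyabs
    set D : ℝ := ∑' n, borelB n * ((n:ℝ) * y^(n-1)) with hD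
    have hE : HasDerivAt (fun z => Real.exp (-(borelF z))) (Real.exp (-(borelF y)) * (-D)) y := by
      have := (hF.neg).exp
      simpa using this
    have hN : HasDerivAt (fun z => borelF z * Real.exp (-(borelF z)))
        (D * Real.exp (-(borelF y)) + borelF y * (Real.exp (-(borelF y)) * (-D))) y :=
      hF.mul hE
    have hH : HasDerivAt H
        (((D * Real.exp (-(borelF y)) + borelF y * (Real.exp (-(borelF y)) * (-D))) * y
          - borelF y * Real.exp (-(borelF y)) * 1) / y^2) y := by
      exact hN.div (hasDerivAt_id y) (ne_of_gt hy0)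
    have hode := borelF_ode y hyabs
    rw [← hD] at hode
    have hzero : ((D * Real.exp (-(borelF y)) + borelF y * (Real.exp (-(borelF y)) * (-D))) * y
          - borelF y * Real.exp (-(borelF y)) * 1) / y^2 = 0 := by
      rw [div_eq_zero_iff]
      left
      linear_combination Real.exp (-(borelF y)) * hode
    rwa [hzero] at hH
  have hconst : ∀ w, 0 < w → w ≤ x → H w = H x := by
    intro w hw0 hwx
    have hsub : Set.Icc w x ⊆ Set.Ioo 0 (Real.exp (-1)) := by
      intro z hz
      exact ⟨lt_of_lt_of_le hw0 hz.1, lt_of_le_of_lt hz.2 hx⟩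
    have hcont : ContinuousOn H (Set.Icc w x) := fun z hz =>
      ((hderiv z (hsub hz)).continuousAt).continuousWithinAt
    have hd : ∀ z ∈ Set.Ico w x, HasDerivWithinAt H 0 (Set.Ici z) z := by
      intro z hz
      exact (hderiv z (hsub ⟨hz.1, hz.2.le⟩)).hasDerivWithinAt
    have := constant_of_has_deriv_right_zero hcont hd
    exact (this x (Set.mem_Icc.mpr ⟨hwx, le_rfl⟩)).symm
  have hHlim : Filter.Tendsto H (nhdsWithin 0 (Set.Ioi 0)) (nhds 1) := by
    have h1 : Filter.Tendsto (fun y => Real.exp (-(borelF y))) (nhdsWithin 0 (Set.Ioi 0)) (nhds 1) := by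
      have hneg : Filter.Tendsto (fun x => -(borelF x)) (nhdsWithin 0 (Set.Ioi 0)) (nhds 0) := by
        simpa using borelF_tendsto_zero.neg
      have := (Real.continuous_exp.tendsto 0).comp hneg
      rw [Real.exp_zero] at this
      exact this
    have h2 := borelF_div_tendsto.mul h1
    rw [mul_one] at h2
    refine h2.congr fun y => ?_
    rw [hHdef]
    ring
  have hev : H =ᶠ[nhdsWithin 0 (Set.Ioi 0)] fun _ => H x := by
    filter_upwards [Ioc_mem_nhdsGT_of_mem (Set.mem_Ico.mpr ⟨le_rfl, hx0⟩)] with w hw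
    exact hconst w hw.1 hw.2
  have htend : Filter.Tendsto H (nhdsWithin 0 (Set.Ioi 0)) (nhds (H x)) := by
    rw [Filter.tendsto_congr' hev]
    exact tendsto_const_nhds
  have hH1 : H x = 1 := tendsto_nhds_unique htend hHlim
  simp only [hHdef] at hH1
  exact (div_eq_one_iff_eq (ne_of_gt hx0)).mp hH1

lemma borelL_eq_one : ∑' n : ℕ, borelB n * Real.exp (-1)^n = 1 := by
  set L : ℝ := ∑' n : ℕ, borelB n * Real.exp (-1)^n with hL
  have hsumL : Summable (fun n : ℕ => borelB n * Real.exp (-1)^n) :=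
    summable_borelB_mul _ (by rw [abs_of_pos (Real.exp_pos _)])
  have hpartial : Filter.Tendsto (fun n => ∑ i ∈ Finset.range n, borelB i * Real.exp (-1)^i)
      Filter.atTop (nhds L) := hsumL.hasSum.tendsto_sum_nat
  have habel := Real.tendsto_tsum_powerSeries_nhdsWithin_lt hpartial
  set ψ : ℝ → ℝ := fun t => ∑' n : ℕ, (borelB n * Real.exp (-1)^n) * t^n with hψ
  have hexp1 : Filter.Tendsto (fun t => ψ t * Real.exp (-(ψ t))) (nhdsWithin 1 (Set.Iio 1))
      (nhds (L * Real.exp (-L))) := by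
    have hneg : Filter.Tendsto (fun t => -(ψ t)) (nhdsWithin 1 (Set.Iio 1)) (nhds (-L)) :=
      habel.neg
    have he : Filter.Tendsto (fun t => Real.exp (-(ψ t))) (nhdsWithin 1 (Set.Iio 1))
        (nhds (Real.exp (-L))) := (Real.continuous_exp.tendsto _).comp hneg
    exact habel.mul he
  have hev : ∀ᶠ t in nhdsWithin 1 (Set.Iio 1),
      ψ t * Real.exp (-(ψ t)) = Real.exp (-1) * t := by
    filter_upwards [Ioo_mem_nhdsLT_of_mem (Set.mem_Ioc.mpr ⟨zero_lt_one, le_rfl⟩)] with t ht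
    obtain ⟨ht0, ht1⟩ := ht
    have hψt : ψ t = borelF (Real.exp (-1) * t) := by
      rw [hψ, borelF]
      refine tsum_congr fun n => ?_
      rw [mul_pow]
      ring
    have h1 : 0 < Real.exp (-1) * t := mul_pos (Real.exp_pos _) ht0
    have h2 : Real.exp (-1) * t < Real.exp (-1) := by
      nlinarith [Real.exp_pos (-1)]
    rw [hψt]
    exact borelF_funeq _ h1 h2
  have hexp2 : Filter.Tendsto (fun t : ℝ => Real.exp (-1) * t) (nhdsWithin 1 (Set.Iio 1))
      (nhds (Real.exp (-1))) := by
    have : Filter.Tendsto (fun t : ℝ => Real.exp (-1) * t) (nhds 1) (nhds (Real.exp (-1) * 1)) :=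
      (continuous_const.mul continuous_id).tendsto 1
    rw [mul_one] at this
    exact this.mono_left nhdsWithin_le_nhds
  have huniq : L * Real.exp (-L) = Real.exp (-1) := by
    have heq : (fun t : ℝ => Real.exp (-1) * t) =ᶠ[nhdsWithin 1 (Set.Iio 1)]
        (fun t => ψ t * Real.exp (-(ψ t))) := hev.mono fun t ht => ht.symm
    exact tendsto_nhds_unique hexp1 (Filter.Tendsto.congr' heq hexp2)
  by_contra hne
  have hL1 : L - 1 ≠ 0 := sub_ne_zero.mpr hne
  have hlt := Real.add_one_lt_exp hL1
  have hlt2 : L < Real.exp (L - 1) := by linarith [hlt]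
  have hp : 0 < Real.exp (-L) := Real.exp_pos _
  have := mul_lt_mul_of_pos_right hlt2 hp
  rw [← Real.exp_add] at this
  have h3 : L - 1 + -L = -1 := by ring
  rw [h3] at this
  linarith [huniq, this]

end BorelAux

/-- The Borel(1) probabilities sum to one: `∑_{k=1}^∞ e^{-k} k^{k-1} / k! = 1`. -/
theorem borel_one_pmf_sums_to_one :
    ∑' k : ℕ, Real.exp (-((k : ℝ) + 1)) * ((k : ℝ) + 1) ^ k / Nat.factorial (k + 1) = 1 := by
  have hsumL : Summable (fun n : ℕ => borelB n * Real.exp (-1)^n) :=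
    summable_borelB_mul _ (by rw [abs_of_pos (Real.exp_pos _)])
  have h0 := Summable.tsum_eq_zero_add hsumL
  have hL := borelL_eq_one
  rw [h0] at hL
  rw [borelB_zero, zero_mul, zero_add] at hL
  have hterm : ∀ k : ℕ, Real.exp (-((k:ℝ)+1)) * ((k:ℝ)+1)^k / ((k+1).factorial : ℝ)
      = borelB (k+1) * Real.exp (-1)^(k+1) := by
    intro k
    rw [borelB, if_neg (Nat.succ_ne_zero k)]
    have hexp : Real.exp (-1)^(k+1) = Real.exp (-((k:ℝ)+1)) := by
      rw [← Real.exp_nat_mul]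
      congr 1
      push_cast
      ring
    rw [hexp]
    have h2 : ((k+1:ℕ):ℝ)^(k+1-1) = ((k:ℝ)+1)^k := by push_cast; norm_num
    rw [h2]
    ring
  rw [tsum_congr hterm]
  exact hL
end

section
/- The function x ↦ (2π x (1-x)³)^{-1/2} exp(-x/(2(1-x))) is a probability density on (0,1); i.e. ∫_0^1 (2π x (1-x)³)^{-1/2} exp(-x/(2(1-x))) dx = 1. -/
open Real MeasureTheory Set

lemma fireproof_aux_image :
    (fun u : ℝ => u ^ 2 / (1 + u ^ 2)) '' Set.Ioi 0 = Set.Ioo (0 : ℝ) 1 := by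
  ext y
  constructor
  · rintro ⟨u, hu, rfl⟩
    have hu0 : (0:ℝ) < u := hu
    have h1 : (0:ℝ) < 1 + u ^ 2 := by positivity
    constructor
    · positivity
    · rw [div_lt_one h1]; nlinarith
  · rintro ⟨hy0, hy1⟩
    refine ⟨Real.sqrt (y / (1 - y)), ?_, ?_⟩
    · have : (0:ℝ) < y / (1 - y) := by
        apply div_pos hy0; linarith
      exact Real.sqrt_pos.mpr this
    · have h1y : (0:ℝ) < 1 - y := by linarith
      have hsq : Real.sqrt (y / (1 - y)) ^ 2 = y / (1 - y) := by
        rw [Real.sq_sqrt]; positivity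
      show Real.sqrt (y / (1 - y)) ^ 2 / (1 + Real.sqrt (y / (1 - y)) ^ 2) = y
      rw [hsq]
      field_simp
      ring

/-- The function `x ↦ (2π x (1-x)³)^{-1/2} exp(-x/(2(1-x)))` is a probability
density on `(0,1)`. -/
theorem fireproof_density_integral_eq_one :
    ∫ x in Set.Ioo (0 : ℝ) 1,
      (1 / Real.sqrt (2 * π * x * (1 - x) ^ 3)) * Real.exp (-x / (2 * (1 - x))) = 1 := by
  set f : ℝ → ℝ := fun u => u ^ 2 / (1 + u ^ 2) with hf_def
  set f' : ℝ → ℝ := fun u => 2 * u / (1 + u ^ 2) ^ 2 with hf'_def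
  have hderiv : ∀ u ∈ Set.Ioi (0:ℝ), HasDerivWithinAt f (f' u) (Set.Ioi 0) u := by
    intro u hu
    have h1 : (1 + u ^ 2) ≠ 0 := by positivity
    have : HasDerivAt f (f' u) u := by
      have h : HasDerivAt (fun x : ℝ => x ^ 2 / (1 + x ^ 2)) _ u := (hasDerivAt_pow 2 u).div ((hasDerivAt_const u 1).add (hasDerivAt_pow 2 u)) h1
      convert h using 1
      simp only [hf'_def]
      field_simp
      ring
    exact this.hasDerivWithinAt
  have hinj : Set.InjOn f (Set.Ioi 0) := by
    intro u hu v hv h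
    have hu0 : (0:ℝ) < u := hu
    have hv0 : (0:ℝ) < v := hv
    have h1 : (1 + u ^ 2) ≠ 0 := by positivity
    have h2 : (1 + v ^ 2) ≠ 0 := by positivity
    have : u ^ 2 * (1 + v ^ 2) = v ^ 2 * (1 + u ^ 2) := by
      simp only [hf_def] at h
      field_simp at h
      linarith [h]
    nlinarith
  have key := integral_image_eq_integral_abs_deriv_smul measurableSet_Ioi hderiv hinj
    (fun x => (1 / Real.sqrt (2 * π * x * (1 - x) ^ 3)) * Real.exp (-x / (2 * (1 - x))))
  rw [← fireproof_aux_image, key]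
  have hcong : ∀ u ∈ Set.Ioi (0:ℝ),
      |f' u| • ((1 / Real.sqrt (2 * π * f u * (1 - f u) ^ 3)) *
        Real.exp (-f u / (2 * (1 - f u)))) = (2 / Real.sqrt (2 * π)) * Real.exp (-(1/2) * u ^ 2) := by
    intro u hu
    have hu0 : (0:ℝ) < u := hu
    have h1 : (0:ℝ) < 1 + u ^ 2 := by positivity
    have h1' : (1 + u ^ 2) ≠ 0 := ne_of_gt h1
    have hfu : f u = u ^ 2 / (1 + u ^ 2) := rfl
    have h1f : 1 - f u = 1 / (1 + u ^ 2) := by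
      rw [hfu]; field_simp; ring
    have h2π : Real.sqrt (2 * π) ^ 2 = 2 * π := Real.sq_sqrt (by positivity)
    have harg : 2 * π * f u * (1 - f u) ^ 3 = (Real.sqrt (2 * π) * u / (1 + u ^ 2) ^ 2) ^ 2 := by
      have hr : (Real.sqrt (2 * π) * u / (1 + u ^ 2) ^ 2) ^ 2
          = 2 * π * u ^ 2 / ((1 + u ^ 2) ^ 2) ^ 2 := by
        rw [div_pow, mul_pow, h2π]
      rw [hfu, h1f, hr]
      field_simp
    have hsqrt : Real.sqrt (2 * π * f u * (1 - f u) ^ 3)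
        = Real.sqrt (2 * π) * u / (1 + u ^ 2) ^ 2 := by
      rw [harg, Real.sqrt_sq (by positivity)]
    have hexp : -f u / (2 * (1 - f u)) = -(1/2) * u ^ 2 := by
      rw [hfu, h1f]; field_simp
    rw [hsqrt, hexp]
    have habs : |f' u| = 2 * u / (1 + u ^ 2) ^ 2 := by
      rw [hf'_def]
      exact abs_of_pos (by positivity)
    rw [smul_eq_mul, habs]
    have hs : Real.sqrt (2 * π) ≠ 0 := by positivity
    field_simp
  rw [setIntegral_congr_fun measurableSet_Ioi hcong]
  rw [integral_const_mul, integral_gaussian_Ioi]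
  have h2π : Real.sqrt (π / (1/2)) = Real.sqrt (2 * π) := by norm_num [mul_comm]
  rw [h2π]
  have hs : Real.sqrt (2 * π) ≠ 0 := by positivity
  field_simp
end

section
/- For every a > 0, the function x ↦ a (2π x (1-x)³)^{-1/2} exp(-a² x/(2(1-x))) is a probability density on (0,1). -/
open Real

/-- For every `a > 0`, the function
`x ↦ a (2π x (1-x)³)^{-1/2} exp(-a² x/(2(1-x)))` is a probability density on `(0,1)`. -/
theorem fireproof_density_general_integral_eq_one (a : ℝ) (ha : 0 < a) :
    ∫ x in Set.Ioo (0 : ℝ) 1,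
      a * (1 / Real.sqrt (2 * π * x * (1 - x) ^ 3)) * Real.exp (-(a ^ 2 * x) / (2 * (1 - x)))
      = 1 := by
  have hπ : (0:ℝ) < 2 * π := by positivity
  set φ : ℝ → ℝ := fun s => s ^ 2 / (s ^ 2 + a ^ 2) with hφdef
  have hderiv : ∀ s ∈ Set.Ioi (0:ℝ),
      HasDerivWithinAt φ (2 * s * a ^ 2 / (s ^ 2 + a ^ 2) ^ 2) (Set.Ioi 0) s := by
    intro s hs
    have hc : s ^ 2 + a ^ 2 ≠ 0 := by positivity
    have h1 : HasDerivAt (fun s : ℝ => s ^ 2) (2 * s) s := by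
      simpa using (hasDerivAt_pow 2 s)
    have h2 : HasDerivAt (fun s : ℝ => s ^ 2 + a ^ 2) (2 * s) s := h1.add_const _
    have h3 := h1.div h2 hc
    have h4 : HasDerivAt φ (2 * s * a ^ 2 / (s ^ 2 + a ^ 2) ^ 2) s := by
      exact h3.congr_deriv (by ring)
    exact h4.hasDerivWithinAt
  have hinj : Set.InjOn φ (Set.Ioi 0) := by
    intro s hs t ht h
    simp only [hφdef] at h
    have hs' : 0 < s := hs
    have ht' : 0 < t := ht
    have hcs : s ^ 2 + a ^ 2 ≠ 0 := by positivity
    have hct : t ^ 2 + a ^ 2 ≠ 0 := by positivity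
    field_simp at h
    have ha2 : (0:ℝ) < a ^ 2 := by positivity
    have h3 : s ^ 2 * a ^ 2 = t ^ 2 * a ^ 2 := by nlinarith [h]
    have h2 : s ^ 2 = t ^ 2 := mul_right_cancel₀ ha2.ne' h3
    nlinarith [h2, mul_pos hs' ht', sq_nonneg (s - t), sq_nonneg (s + t)]
  have himg : φ '' Set.Ioi 0 = Set.Ioo 0 1 := by
    ext y
    constructor
    · rintro ⟨s, hs, rfl⟩
      have hs' : (0:ℝ) < s := hs
      have hc : (0:ℝ) < s ^ 2 + a ^ 2 := by positivity
      refine ⟨by positivity, ?_⟩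
      rw [div_lt_one hc]
      nlinarith
    · rintro ⟨hy0, hy1⟩
      have h1y : (0:ℝ) < 1 - y := by linarith
      have hq : (0:ℝ) < y / (1 - y) := div_pos hy0 h1y
      refine ⟨a * Real.sqrt (y / (1 - y)), ?_, ?_⟩
      · exact mul_pos ha (Real.sqrt_pos.mpr hq)
      · have hsq : (a * Real.sqrt (y / (1 - y))) ^ 2 = a ^ 2 * (y / (1 - y)) := by
          rw [mul_pow, Real.sq_sqrt hq.le]
        simp only [hφdef, hsq]
        have ha2 : (a:ℝ) ^ 2 ≠ 0 := by positivity
        field_simp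
        ring
  rw [← himg,
    MeasureTheory.integral_image_eq_integral_abs_deriv_smul measurableSet_Ioi hderiv hinj]
  have heq : ∀ s ∈ Set.Ioi (0:ℝ),
      |2 * s * a ^ 2 / (s ^ 2 + a ^ 2) ^ 2| •
        (a * (1 / Real.sqrt (2 * π * φ s * (1 - φ s) ^ 3)) *
          Real.exp (-(a ^ 2 * φ s) / (2 * (1 - φ s))))
      = (2 / Real.sqrt (2 * π)) * Real.exp (-(1/2) * s ^ 2) := by
    intro s hs
    have hs' : (0:ℝ) < s := hs
    have hc : (0:ℝ) < s ^ 2 + a ^ 2 := by positivity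
    have h1φ : 1 - φ s = a ^ 2 / (s ^ 2 + a ^ 2) := by
      simp only [hφdef]
      field_simp
      ring
    have hx : φ s = s ^ 2 / (s ^ 2 + a ^ 2) := rfl
    rw [hx, h1φ]
    have hsqrt : Real.sqrt (2 * π * (s ^ 2 / (s ^ 2 + a ^ 2)) *
        (a ^ 2 / (s ^ 2 + a ^ 2)) ^ 3)
        = Real.sqrt (2 * π) * s * a ^ 3 / (s ^ 2 + a ^ 2) ^ 2 := by
      have h1 : 2 * π * (s ^ 2 / (s ^ 2 + a ^ 2)) * (a ^ 2 / (s ^ 2 + a ^ 2)) ^ 3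
          = (Real.sqrt (2 * π) * s * a ^ 3 / (s ^ 2 + a ^ 2) ^ 2) ^ 2 := by
        have h2 : (2 * π) = Real.sqrt (2 * π) ^ 2 := (Real.sq_sqrt hπ.le).symm
        nth_rewrite 1 [h2]
        field_simp [hc.ne']
      rw [h1, Real.sqrt_sq (by positivity)]
    rw [hsqrt]
    have hexp : -(a ^ 2 * (s ^ 2 / (s ^ 2 + a ^ 2))) /
        (2 * (a ^ 2 / (s ^ 2 + a ^ 2))) = -(1/2) * s ^ 2 := by
      have ha2 : (a:ℝ) ^ 2 ≠ 0 := by positivity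
      field_simp
    rw [hexp, smul_eq_mul, abs_of_pos (by positivity)]
    have hsπ : Real.sqrt (2 * π) ≠ 0 := by positivity
    field_simp
  rw [MeasureTheory.setIntegral_congr_fun measurableSet_Ioi heq,
    MeasureTheory.integral_const_mul]
  have : ∫ s in Set.Ioi (0:ℝ), Real.exp (-(1/2) * s ^ 2)
      = Real.sqrt (π / (1/2)) / 2 := by
    simpa using integral_gaussian_Ioi (1/2)
  rw [this]
  have h2π : π / (1/2) = 2 * π := by ring
  rw [h2π]
  have hsπ : Real.sqrt (2 * π) ≠ 0 := by positivity
  field_simp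
end

section
/- Let λ_n be a random variable with P(λ_n = k) = (k+1)(n-1)! / (n^{k+1}(n-k-1)!) for k = 0, 1, ..., n-1. Then these probabilities sum to 1, and λ_n/√n converges in distribution to a Rayleigh random variable with density s e^{-s²/2} as n → ∞. -/
open Real Filter

noncomputable def Tprod (n M : ℕ) : ℝ := ∏ i ∈ Finset.range M, (((n:ℝ) - 1 - i) / n)

lemma desc_cast (n k : ℕ) (hn : 1 ≤ n) (hk : k < n) :
    ((n-1).descFactorial k : ℝ) = ∏ i ∈ Finset.range k, ((n:ℝ) - 1 - i) := by
  rw [Nat.descFactorial_eq_prod_range, Nat.cast_prod]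
  refine Finset.prod_congr rfl fun i hi => ?_
  have hi' : i < k := Finset.mem_range.mp hi
  have h1 : i ≤ n - 1 := le_of_lt (lt_of_lt_of_le hi' (Nat.le_sub_one_of_lt hk))
  rw [Nat.cast_sub h1, Nat.cast_sub hn]
  push_cast; ring

lemma pmf_eq (n k : ℕ) (hk : k < n) :
    ((k : ℝ) + 1) * Nat.factorial (n - 1) / ((n : ℝ) ^ (k + 1) * Nat.factorial (n - k - 1))
      = ((k:ℝ)+1)/n * Tprod n k := by
  have hn : 1 ≤ n := Nat.one_le_of_lt (Nat.lt_of_le_of_lt (Nat.zero_le k) hk)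
  have hk1 : k ≤ n - 1 := Nat.le_sub_one_of_lt hk
  have hfac : (Nat.factorial (n-1) : ℝ)
      = (Nat.factorial (n-1-k) : ℝ) * ((n-1).descFactorial k : ℝ) := by
    rw [← Nat.cast_mul, Nat.factorial_mul_descFactorial hk1]
  have hsub : n - k - 1 = n - 1 - k := by omega
  have hnpos : (0:ℝ) < n := by exact_mod_cast Nat.lt_of_le_of_lt (Nat.zero_le k) hk
  have hfpos : (0:ℝ) < (Nat.factorial (n-1-k) : ℝ) := by exact_mod_cast (n-1-k).factorial_pos
  rw [hsub, hfac, desc_cast n k hn hk]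
  rw [Tprod, Finset.prod_div_distrib, Finset.prod_const]
  rw [pow_succ]
  field_simp
  simp only [Finset.card_range]

lemma partial_sum (n : ℕ) (hn : 1 ≤ n) : ∀ M, M ≤ n →
    ∑ k ∈ Finset.range M,
      ((k : ℝ) + 1) * Nat.factorial (n - 1) / ((n : ℝ) ^ (k + 1) * Nat.factorial (n - k - 1))
      = 1 - Tprod n M := by
  intro M
  induction M with
  | zero => intro _; simp [Tprod]
  | succ M ih =>
    intro hM
    have hMn : M < n := hM
    rw [Finset.sum_range_succ, ih (le_of_lt hMn), pmf_eq n M hMn]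
    have hstep : Tprod n (M+1) = Tprod n M * (((n:ℝ) - 1 - M) / n) := by
      rw [Tprod, Finset.prod_range_succ]; rfl
    have hnpos : (0:ℝ) < n := by exact_mod_cast hn
    rw [hstep]
    field_simp
    ring

lemma Tprod_n (n : ℕ) (hn : 1 ≤ n) : Tprod n n = 0 := by
  apply Finset.prod_eq_zero (Finset.mem_range.mpr (Nat.sub_lt hn Nat.one_pos))
  have : ((n - 1 : ℕ) : ℝ) = (n:ℝ) - 1 := by
    rw [Nat.cast_sub hn]; norm_num
  rw [this]
  simp

lemma exp_lb (x : ℝ) (h0 : 0 ≤ x) (h5 : x ≤ 1/5) : Real.exp (-(x + x^2)) ≤ 1 - x := by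
  have hE : (0:ℝ) < Real.exp (x + x^2) := Real.exp_pos _
  have e1 : 1 + (x+x^2)/2 ≤ Real.exp ((x+x^2)/2) := by
    have := Real.add_one_le_exp ((x+x^2)/2); linarith
  have hb : (0:ℝ) ≤ 1 + (x+x^2)/2 := by nlinarith
  have e2 : (1 + (x+x^2)/2)^2 ≤ Real.exp (x + x^2) := by
    have h := mul_le_mul e1 e1 hb (Real.exp_pos _).le
    rw [← Real.exp_add] at h
    calc (1 + (x+x^2)/2)^2 = (1 + (x+x^2)/2) * (1 + (x+x^2)/2) := sq _
    _ ≤ Real.exp ((x+x^2)/2 + (x+x^2)/2) := h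
    _ = Real.exp (x+x^2) := by ring_nf
  have key : 1 ≤ (1-x) * Real.exp (x + x^2) := by nlinarith [sq_nonneg x, sq_nonneg (x*x)]
  rw [Real.exp_neg, inv_eq_one_div, div_le_iff₀ hE]
  linarith

lemma fac_eq (n : ℕ) (hn : 1 ≤ n) (i : ℕ) :
    ((n:ℝ) - 1 - i) / n = 1 - ((i:ℝ)+1)/n := by
  have hnpos : (0:ℝ) < n := by exact_mod_cast hn
  field_simp
  ring

lemma Tprod_upper (n M : ℕ) (hn : 1 ≤ n) (hM : M ≤ n) :
    Tprod n M ≤ Real.exp (-(∑ i ∈ Finset.range M, ((i:ℝ)+1)/n)) := by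
  have hnpos : (0:ℝ) < n := by exact_mod_cast hn
  have h1 : Real.exp (-(∑ i ∈ Finset.range M, ((i:ℝ)+1)/n))
      = ∏ i ∈ Finset.range M, Real.exp (-(((i:ℝ)+1)/n)) := by
    rw [← Real.exp_sum]; congr 1; rw [← Finset.sum_neg_distrib]
  rw [h1, Tprod]
  apply Finset.prod_le_prod
  · intro i hi
    have hi' : i < M := Finset.mem_range.mp hi
    have : (i:ℝ) + 1 ≤ n := by
      have : i + 1 ≤ n := Nat.succ_le_of_lt (lt_of_lt_of_le hi' hM)
      exact_mod_cast this
    rw [fac_eq n hn i]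
    have : ((i:ℝ)+1)/n ≤ 1 := by rw [div_le_one hnpos]; exact this
    linarith
  · intro i hi
    rw [fac_eq n hn i]
    have := Real.add_one_le_exp (-(((i:ℝ)+1)/n))
    linarith

lemma Tprod_lower (n M : ℕ) (hn : 1 ≤ n) (h5 : (M:ℝ)/n ≤ 1/5) :
    Real.exp (-((∑ i ∈ Finset.range M, ((i:ℝ)+1)/n)
      + ∑ i ∈ Finset.range M, (((i:ℝ)+1)/n)^2)) ≤ Tprod n M := by
  have hnpos : (0:ℝ) < n := by exact_mod_cast hn
  have h1 : Real.exp (-((∑ i ∈ Finset.range M, ((i:ℝ)+1)/n)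
        + ∑ i ∈ Finset.range M, (((i:ℝ)+1)/n)^2))
      = ∏ i ∈ Finset.range M, Real.exp (-(((i:ℝ)+1)/n + (((i:ℝ)+1)/n)^2)) := by
    rw [← Real.exp_sum]; congr 1
    rw [← Finset.sum_add_distrib]
    exact (Finset.sum_neg_distrib _).symm
  rw [h1, Tprod]
  apply Finset.prod_le_prod
  · intro i _; exact (Real.exp_pos _).le
  · intro i hi
    have hi' : i < M := Finset.mem_range.mp hi
    have hx0 : (0:ℝ) ≤ ((i:ℝ)+1)/n := by positivity
    have hx5 : ((i:ℝ)+1)/n ≤ 1/5 := by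
      refine le_trans ?_ h5
      gcongr
      exact_mod_cast hi'
    rw [fac_eq n hn i]
    exact exp_lb _ hx0 hx5

lemma inv_sqrt_tendsto : Tendsto (fun n : ℕ => 1 / Real.sqrt n) atTop (nhds 0) := by
  have h1 : Tendsto (fun n : ℕ => ((n:ℝ))⁻¹) atTop (nhds 0) :=
    tendsto_inv_atTop_zero.comp tendsto_natCast_atTop_atTop
  have h2 : Tendsto (fun n : ℕ => Real.sqrt ((n:ℝ)⁻¹)) atTop (nhds (Real.sqrt 0)) :=
    (Real.continuous_sqrt.continuousAt.tendsto).comp h1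
  simpa [Real.sqrt_inv, one_div, Real.sqrt_zero] using h2

lemma m_div_sqrt_tendsto (s : ℝ) (hs : 0 ≤ s) :
    Tendsto (fun n : ℕ => ((⌊s * Real.sqrt n⌋₊ + 1 : ℕ) : ℝ) / Real.sqrt n) atTop (nhds s) := by
  refine tendsto_of_tendsto_of_tendsto_of_le_of_le'
    (g := fun _ : ℕ => s) (h := fun n : ℕ => s + 1 / Real.sqrt n)
    tendsto_const_nhds (by simpa using tendsto_const_nhds.add inv_sqrt_tendsto) ?_ ?_
  · filter_upwards [eventually_ge_atTop 1] with n hn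
    have hsq : (0:ℝ) < Real.sqrt n := Real.sqrt_pos.mpr (by exact_mod_cast hn)
    rw [le_div_iff₀ hsq]
    have := Nat.lt_floor_add_one (s * Real.sqrt n)
    push_cast
    linarith
  · filter_upwards [eventually_ge_atTop 1] with n hn
    have hsq : (0:ℝ) < Real.sqrt n := Real.sqrt_pos.mpr (by exact_mod_cast hn)
    rw [div_le_iff₀ hsq]
    have h1 := Nat.floor_le (by positivity : (0:ℝ) ≤ s * Real.sqrt n)
    have h2 : (1 / Real.sqrt n) * Real.sqrt n = 1 := by field_simp
    push_cast
    nlinarith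

lemma sum_one (M : ℕ) : ∑ i ∈ Finset.range M, ((i:ℝ)+1) = M*(M+1)/2 := by
  induction M with
  | zero => simp
  | succ M ih => rw [Finset.sum_range_succ, ih]; push_cast; ring

lemma m_div_tendsto (s : ℝ) (hs : 0 ≤ s) :
    Tendsto (fun n : ℕ => ((⌊s * Real.sqrt n⌋₊ + 1 : ℕ) : ℝ) / n) atTop (nhds 0) := by
  have h := (m_div_sqrt_tendsto s hs).mul inv_sqrt_tendsto
  rw [mul_zero] at h
  apply h.congr'
  filter_upwards [eventually_ge_atTop 1] with n hn
  have hsq : (0:ℝ) < Real.sqrt n := Real.sqrt_pos.mpr (by exact_mod_cast hn)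
  have hss : Real.sqrt n * Real.sqrt n = (n:ℝ) := Real.mul_self_sqrt (by positivity)
  field_simp
  nlinarith [hss]

lemma eventually_m_le (s : ℝ) (hs : 0 ≤ s) :
    ∀ᶠ n : ℕ in atTop, (((⌊s * Real.sqrt n⌋₊ + 1 : ℕ) : ℝ)) / n ≤ 1/5
      ∧ (⌊s * Real.sqrt n⌋₊ + 1) ≤ n ∧ 1 ≤ n := by
  filter_upwards [(m_div_tendsto s hs).eventually (gt_mem_nhds (by norm_num : (0:ℝ) < 1/5)),
    eventually_ge_atTop 1] with n h5 hn
  have hnpos : (0:ℝ) < n := by exact_mod_cast hn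
  refine ⟨h5.le, ?_, hn⟩
  have : (((⌊s * Real.sqrt n⌋₊ + 1 : ℕ)):ℝ) ≤ n := by
    rw [div_lt_iff₀ hnpos] at h5; nlinarith
  exact_mod_cast this

lemma Tprod_tendsto (s : ℝ) (hs : 0 ≤ s) :
    Tendsto (fun n : ℕ => Tprod n (⌊s * Real.sqrt n⌋₊ + 1)) atTop
      (nhds (Real.exp (-s^2/2))) := by
  set m : ℕ → ℕ := fun n => ⌊s * Real.sqrt n⌋₊ + 1 with hm
  set A : ℕ → ℝ := fun n => ∑ i ∈ Finset.range (m n), ((i:ℝ)+1)/n with hA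
  set B : ℕ → ℝ := fun n => ∑ i ∈ Finset.range (m n), (((i:ℝ)+1)/n)^2 with hB
  have hr := m_div_sqrt_tendsto s hs
  have hAt : Tendsto A atTop (nhds (s^2/2)) := by
    have h2 : Tendsto (fun n : ℕ => ((m n : ℝ)/Real.sqrt n) * (((m n : ℝ)/Real.sqrt n) + 1/Real.sqrt n) / 2)
        atTop (nhds (s * (s + 0) / 2)) := ((hr.mul (hr.add inv_sqrt_tendsto)).div_const 2)
    have : s * (s + 0) / 2 = s^2/2 := by ring
    rw [this] at h2
    apply h2.congr'
    filter_upwards [eventually_ge_atTop 1] with n hn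
    have hsq : (0:ℝ) < Real.sqrt n := Real.sqrt_pos.mpr (by exact_mod_cast hn)
    have hss : Real.sqrt n * Real.sqrt n = (n:ℝ) := Real.mul_self_sqrt (by positivity)
    simp only [hA, ← Finset.sum_div, sum_one]
    field_simp
    ring_nf
    rw [Real.sq_sqrt (by positivity)]
  have hBt : Tendsto B atTop (nhds 0) := by
    have hub : Tendsto (fun n : ℕ => ((m n : ℝ)/Real.sqrt n)^3 * (1/Real.sqrt n)) atTop (nhds (s^3 * 0)) :=
      (hr.pow 3).mul inv_sqrt_tendsto
    rw [mul_zero] at hub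
    refine tendsto_of_tendsto_of_tendsto_of_le_of_le'
      (g := fun _ : ℕ => (0:ℝ)) (h := fun n : ℕ => ((m n : ℝ)/Real.sqrt n)^3 * (1/Real.sqrt n))
      tendsto_const_nhds hub ?_ ?_
    · filter_upwards with n
      apply Finset.sum_nonneg; intro i _; positivity
    · filter_upwards [eventually_ge_atTop 1] with n hn
      have hnpos : (0:ℝ) < n := by exact_mod_cast hn
      have hsq : (0:ℝ) < Real.sqrt n := Real.sqrt_pos.mpr hnpos
      have hss : Real.sqrt n * Real.sqrt n = (n:ℝ) := Real.mul_self_sqrt (by positivity)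
      have step1 : B n ≤ (m n : ℝ) * ((m n : ℝ)/n)^2 := by
        have : B n ≤ ∑ _i ∈ Finset.range (m n), ((m n : ℝ)/n)^2 := by
          apply Finset.sum_le_sum
          intro i hi
          have hi' : (i:ℝ) + 1 ≤ (m n : ℝ) := by exact_mod_cast Finset.mem_range.mp hi
          gcongr
        simpa using this
      refine step1.trans (le_of_eq ?_)
      have h4 : (Real.sqrt n)^4 = (n:ℝ)^2 := by
        have h2 : (Real.sqrt n)^2 = (n:ℝ) := Real.sq_sqrt hnpos.le
        calc (Real.sqrt n)^4 = ((Real.sqrt n)^2)^2 := by ring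
        _ = (n:ℝ)^2 := by rw [h2]
      have e1 : ((m n:ℝ)/Real.sqrt n)^3 * (1/Real.sqrt n) = (m n:ℝ)^3 / (Real.sqrt n)^4 := by
        field_simp
      have e2 : (m n:ℝ) * ((m n:ℝ)/n)^2 = (m n:ℝ)^3/(n:ℝ)^2 := by
        field_simp
      rw [e1, e2, h4]
  have hgt : Tendsto (fun n : ℕ => Real.exp (-(A n + B n))) atTop (nhds (Real.exp (-s^2/2))) := by
    have : Tendsto (fun n : ℕ => -(A n + B n)) atTop (nhds (-(s^2/2 + 0))) := (hAt.add hBt).neg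
    rw [add_zero] at this
    have h2 : Tendsto (fun n : ℕ => Real.exp (-(A n + B n))) atTop (nhds (Real.exp (-(s^2/2)))) :=
      (Real.continuous_exp.continuousAt.tendsto).comp this
    have : -(s^2/2) = -s^2/2 := by ring
    rwa [this] at h2
  have hht : Tendsto (fun n : ℕ => Real.exp (-A n)) atTop (nhds (Real.exp (-s^2/2))) := by
    have h2 : Tendsto (fun n : ℕ => Real.exp (-A n)) atTop (nhds (Real.exp (-(s^2/2)))) :=
      (Real.continuous_exp.continuousAt.tendsto).comp hAt.neg
    have : -(s^2/2) = -s^2/2 := by ring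
    rwa [this] at h2
  refine tendsto_of_tendsto_of_tendsto_of_le_of_le'
    (g := fun n : ℕ => Real.exp (-(A n + B n))) (h := fun n : ℕ => Real.exp (-A n)) hgt hht ?_ ?_
  · filter_upwards [eventually_m_le s hs] with n hc
    exact Tprod_lower n (m n) hc.2.2 hc.1
  · filter_upwards [eventually_m_le s hs] with n hc
    exact Tprod_upper n (m n) hc.2.2 hc.2.1

/-- The spine-length probabilities `P(λ_n = k) = (k+1)(n-1)! / (n^{k+1}(n-k-1)!)`,
`k = 0,…,n-1`, sum to `1`, and `λ_n/√n` converges in distribution to a Rayleigh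
random variable with density `s e^{-s²/2}` (stated via convergence of the
cumulative distribution functions at every point). -/
theorem spine_length_pmf_and_rayleigh_limit :
    (∀ n : ℕ, 1 ≤ n →
      ∑ k ∈ Finset.range n,
        ((k : ℝ) + 1) * Nat.factorial (n - 1) / ((n : ℝ) ^ (k + 1) * Nat.factorial (n - k - 1))
        = 1) ∧
    ∀ s : ℝ,
      Tendsto (fun n : ℕ =>
          ∑ k ∈ Finset.range n,
            if (k : ℝ) ≤ s * Real.sqrt n then
              ((k : ℝ) + 1) * Nat.factorial (n - 1) /
                ((n : ℝ) ^ (k + 1) * Nat.factorial (n - k - 1))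
            else 0)
        atTop (nhds (if 0 ≤ s then 1 - Real.exp (-s ^ 2 / 2) else 0)) := by
  constructor
  · intro n hn
    rw [partial_sum n hn n le_rfl, Tprod_n n hn, sub_zero]
  · intro s
    by_cases hs : 0 ≤ s
    · rw [if_pos hs]
      have ht := (tendsto_const_nhds (x := (1:ℝ))).sub (Tprod_tendsto s hs)
      apply ht.congr'
      filter_upwards [eventually_m_le s hs] with n hc
      have hmn : ⌊s * Real.sqrt n⌋₊ + 1 ≤ n := hc.2.1
      have hn : 1 ≤ n := hc.2.2
      have hsqnn : (0:ℝ) ≤ s * Real.sqrt n := by positivity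
      have hfilter : (Finset.range n).filter (fun k : ℕ => (k:ℝ) ≤ s * Real.sqrt n)
          = Finset.range (⌊s * Real.sqrt n⌋₊ + 1) := by
        ext k
        simp only [Finset.mem_filter, Finset.mem_range]
        constructor
        · rintro ⟨hkn, hks⟩
          exact Nat.lt_succ_of_le (Nat.le_floor hks)
        · intro hk
          have hk' : k ≤ ⌊s * Real.sqrt n⌋₊ := Nat.lt_succ_iff.mp hk
          refine ⟨lt_of_lt_of_le hk hmn, ?_⟩
          calc (k:ℝ) ≤ (⌊s * Real.sqrt n⌋₊ : ℝ) := by exact_mod_cast hk'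
          _ ≤ s * Real.sqrt n := Nat.floor_le hsqnn
      calc (1:ℝ) - Tprod n (⌊s * Real.sqrt n⌋₊ + 1)
          = ∑ k ∈ Finset.range (⌊s * Real.sqrt n⌋₊ + 1),
              ((k : ℝ) + 1) * Nat.factorial (n - 1) /
                ((n : ℝ) ^ (k + 1) * Nat.factorial (n - k - 1)) :=
            (partial_sum n hn _ hmn).symm
        _ = ∑ k ∈ (Finset.range n).filter (fun k : ℕ => (k:ℝ) ≤ s * Real.sqrt n),
              ((k : ℝ) + 1) * Nat.factorial (n - 1) /
                ((n : ℝ) ^ (k + 1) * Nat.factorial (n - k - 1)) := by rw [hfilter]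
        _ = _ := Finset.sum_filter _ _
    · rw [if_neg hs]
      push_neg at hs
      have : (fun n : ℕ =>
          ∑ k ∈ Finset.range n,
            if (k : ℝ) ≤ s * Real.sqrt n then
              ((k : ℝ) + 1) * Nat.factorial (n - 1) /
                ((n : ℝ) ^ (k + 1) * Nat.factorial (n - k - 1))
            else 0) = fun _ : ℕ => (0:ℝ) := by
        funext n
        apply Finset.sum_eq_zero
        intro k hk
        rw [if_neg]
        have hn : 1 ≤ n := Nat.one_le_of_lt (Nat.lt_of_le_of_lt (Nat.zero_le k) (Finset.mem_range.mp hk))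
        have hsq : (0:ℝ) < Real.sqrt n := Real.sqrt_pos.mpr (by exact_mod_cast hn)
        push_neg
        calc s * Real.sqrt n < 0 := mul_neg_of_neg_of_pos hs hsq
        _ ≤ (k:ℝ) := Nat.cast_nonneg k
      rw [this]
      exact tendsto_const_nhds
end

section
/- Let (Y_i) be i.i.d. nonnegative random variables with E[1 - e^{-qY₁}] ≤ C q ln(1/q) for small q > 0 and some constant C. Then for any α > 1/2, n^{-α} ∑_{i=1}^{⌊√n⌋} Y_i → 0 in probability as n → ∞. -/
open MeasureTheory ProbabilityTheory Real Filter

lemma aux_one_sub_exp_sum_le {ι : Type*} (s : Finset ι) (f : ι → ℝ) (hf : ∀ i ∈ s, 0 ≤ f i) :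
    1 - Real.exp (-(∑ i ∈ s, f i)) ≤ ∑ i ∈ s, (1 - Real.exp (-(f i))) := by
  classical
  induction s using Finset.induction_on with
  | empty => simp
  | @insert a s ha ih =>
    rw [Finset.sum_insert ha, Finset.sum_insert ha, neg_add, Real.exp_add]
    have h1 : Real.exp (-f a) ≤ 1 :=
      Real.exp_le_one_iff.mpr (neg_nonpos.mpr (hf a (Finset.mem_insert_self a s)))
    have h2 : Real.exp (-(∑ i ∈ s, f i)) ≤ 1 :=
      Real.exp_le_one_iff.mpr (neg_nonpos.mpr (Finset.sum_nonneg fun i hi =>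
        hf i (Finset.mem_insert_of_mem hi)))
    have h3 := ih (fun i hi => hf i (Finset.mem_insert_of_mem hi))
    nlinarith [Real.exp_pos (-f a), Real.exp_pos (-(∑ i ∈ s, f i))]

/-- Let `(Y_i)` be i.i.d. nonnegative random variables with
`E[1 - e^{-qY₁}] ≤ C q ln(1/q)` for small `q > 0`. Then for any `α > 1/2`,
`n^{-α} ∑_{i=1}^{⌊√n⌋} Y_i → 0` in probability as `n → ∞`. -/
theorem sum_over_sqrt_tendsto_zero_in_probability
    {Ω : Type*} [MeasurableSpace Ω] (μ : Measure Ω) [IsProbabilityMeasure μ]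
    (Y : ℕ → Ω → ℝ) (hmeas : ∀ i, Measurable (Y i)) (hpos : ∀ i ω, 0 ≤ Y i ω)
    (hindep : iIndepFun Y μ)
    (hident : ∀ i, IdentDistrib (Y i) (Y 0) μ μ)
    (C : ℝ)
    (hlap : ∃ q₀ > (0 : ℝ), ∀ q : ℝ, 0 < q → q < q₀ →
      ∫ ω, (1 - Real.exp (-q * Y 0 ω)) ∂μ ≤ C * q * Real.log (1 / q))
    (α : ℝ) (hα : 1 / 2 < α) :
    ∀ ε > (0 : ℝ),
      Tendsto (fun n : ℕ =>
          μ {ω | ε ≤ (n : ℝ) ^ (-α) * ∑ i ∈ Finset.range (Nat.sqrt n), Y i ω})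
        atTop (nhds 0) := by
  intro ε hε
  obtain ⟨q₀, hq₀, hlap'⟩ := hlap
  set c : ℝ := 1 - Real.exp (-1) with hcdef
  have hc : 0 < c := by
    have : Real.exp (-1) < 1 := Real.exp_lt_one_iff.mpr (by norm_num)
    simp only [hcdef]; linarith
  -- C is nonnegative
  have hC : 0 ≤ C := by
    by_contra hneg
    push_neg at hneg
    have hmin : 0 < min q₀ 1 := lt_min hq₀ one_pos
    set q : ℝ := min q₀ 1 / 2 with hqdef
    have hq1 : 0 < q := by positivity
    have hq2 : q < q₀ := lt_of_lt_of_le (half_lt_self hmin) (min_le_left _ _)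
    have hq3 : q < 1 := lt_of_lt_of_le (half_lt_self hmin) (min_le_right _ _)
    have hint : (0:ℝ) ≤ ∫ ω, (1 - Real.exp (-q * Y 0 ω)) ∂μ := by
      apply integral_nonneg
      intro ω
      have : Real.exp (-q * Y 0 ω) ≤ 1 := Real.exp_le_one_iff.mpr
        (by nlinarith [mul_nonneg hq1.le (hpos 0 ω)])
      simp only [Pi.zero_apply]; linarith
    have hlog : 0 < Real.log (1/q) := Real.log_pos (one_lt_one_div hq1 hq3)
    have := hlap' q hq1 hq2
    nlinarith [mul_pos hq1 hlog]
  -- the Laplace scale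
  set q : ℕ → ℝ := fun n => (n : ℝ) ^ (-α) / ε with hqdef
  have hαpos : (0:ℝ) < α := by linarith
  have hq_tendsto : Tendsto q atTop (nhds 0) := by
    have h1 : Tendsto (fun n : ℕ => (n:ℝ) ^ (-α)) atTop (nhds 0) :=
      (tendsto_rpow_neg_atTop hαpos).comp tendsto_natCast_atTop_atTop
    simpa [hqdef] using h1.div_const ε
  have hq_pos : ∀ n : ℕ, 1 ≤ n → 0 < q n := by
    intro n hn
    have : (0:ℝ) < (n:ℝ) := by exact_mod_cast hn
    exact div_pos (Real.rpow_pos_of_pos this _) hε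
  -- key measure bound
  set u : ℕ → ℝ := fun n =>
    (Nat.sqrt n : ℝ) * (C * q n * Real.log (1 / q n)) / c with hudef
  have hint_i : ∀ (r : ℝ), 0 ≤ r → ∀ (i : ℕ),
      Integrable (fun ω => 1 - Real.exp (-(r * Y i ω))) μ := by
    intro r hr i
    have hm : Measurable fun ω => 1 - Real.exp (-(r * Y i ω)) :=
      measurable_const.sub (((hmeas i).const_mul r).neg.exp)
    refine (integrable_const (1:ℝ)).mono' hm.aestronglyMeasurable (ae_of_all _ fun ω => ?_)
    have h1 : Real.exp (-(r * Y i ω)) ≤ 1 := Real.exp_le_one_iff.mpr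
      (neg_nonpos.mpr (mul_nonneg hr (hpos i ω)))
    have h2 := Real.exp_pos (-(r * Y i ω))
    rw [Real.norm_eq_abs, abs_le]
    constructor <;> nlinarith
  have hbound : ∀ n : ℕ, 1 ≤ n → q n < q₀ →
      μ {ω | ε ≤ (n : ℝ) ^ (-α) * ∑ i ∈ Finset.range (Nat.sqrt n), Y i ω}
        ≤ ENNReal.ofReal (u n) := by
    intro n hn hqn
    set m := Nat.sqrt n
    set S : Ω → ℝ := fun ω => ∑ i ∈ Finset.range m, Y i ω with hSdef
    set g : Ω → ℝ := fun ω => 1 - Real.exp (-(q n * S ω)) with hgdef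
    have hqnpos := hq_pos n hn
    have hSnonneg : ∀ ω, 0 ≤ S ω := fun ω =>
      Finset.sum_nonneg fun i _ => hpos i ω
    have hSmeas : Measurable S := by
      apply Finset.measurable_sum
      intro i _; exact hmeas i
    have hexp_le : ∀ ω, Real.exp (-(q n * S ω)) ≤ 1 := fun ω =>
      Real.exp_le_one_iff.mpr (neg_nonpos.mpr (mul_nonneg hqnpos.le (hSnonneg ω)))
    have hg_int : Integrable g μ := by
      have hm : Measurable g := measurable_const.sub ((hSmeas.const_mul (q n)).neg.exp)
      refine (integrable_const (1:ℝ)).mono' hm.aestronglyMeasurable (ae_of_all _ fun ω => ?_)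
      have h1 := hexp_le ω
      have h2 := Real.exp_pos (-(q n * S ω))
      rw [Real.norm_eq_abs, abs_le]
      constructor <;> simp only [hgdef] <;> nlinarith
    have hg_nonneg : ∀ ω, 0 ≤ g ω := by
      intro ω
      have h1 := hexp_le ω
      simp only [hgdef]; linarith
    -- inclusion of events
    have hsub : {ω | ε ≤ (n : ℝ) ^ (-α) * S ω} ⊆ {ω | c ≤ g ω} := by
      intro ω hω
      simp only [Set.mem_setOf_eq] at hω ⊢
      have h1 : (1:ℝ) ≤ q n * S ω := by
        rw [hqdef]
        rw [div_mul_eq_mul_div, le_div_iff₀ hε, one_mul]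
        linarith [hω]
      have : Real.exp (-(q n * S ω)) ≤ Real.exp (-1) :=
        Real.exp_le_exp.mpr (by linarith)
      simp only [hgdef, hcdef]; linarith
    -- Markov
    have hmarkov := mul_meas_ge_le_integral_of_nonneg
      (ae_of_all _ hg_nonneg) hg_int c
    -- integral bound
    have hpt : ∀ ω, g ω ≤ ∑ i ∈ Finset.range m, (1 - Real.exp (-(q n * Y i ω))) := by
      intro ω
      have := aux_one_sub_exp_sum_le (Finset.range m) (fun i => q n * Y i ω)
        (fun i _ => mul_nonneg hqnpos.le (hpos i ω))
      simpa [hgdef, hSdef, Finset.mul_sum] using this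
    have hident_int : ∀ i, ∫ ω, (1 - Real.exp (-(q n * Y i ω))) ∂μ
        = ∫ ω, (1 - Real.exp (-(q n) * Y 0 ω)) ∂μ := by
      intro i
      have hu : Measurable fun x : ℝ => 1 - Real.exp (-(q n * x)) :=
        measurable_const.sub ((measurable_id.const_mul (q n)).neg.exp)
      have h := ((hident i).comp hu).integral_eq
      simpa [Function.comp, neg_mul] using h
    have hI : ∫ ω, g ω ∂μ ≤ (m : ℝ) * (C * q n * Real.log (1 / q n)) := by
      have h1 : ∫ ω, g ω ∂μ ≤ ∫ ω, (∑ i ∈ Finset.range m, (1 - Real.exp (-(q n * Y i ω)))) ∂μ := by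
        apply integral_mono hg_int
        · exact integrable_finset_sum _ (fun i _ => hint_i (q n) hqnpos.le i)
        · exact hpt
      have h2 : ∫ ω, (∑ i ∈ Finset.range m, (1 - Real.exp (-(q n * Y i ω)))) ∂μ
          = ∑ i ∈ Finset.range m, ∫ ω, (1 - Real.exp (-(q n * Y i ω))) ∂μ :=
        integral_finset_sum _ (fun i _ => hint_i (q n) hqnpos.le i)
      have h3 : ∑ i ∈ Finset.range m, ∫ ω, (1 - Real.exp (-(q n * Y i ω))) ∂μ
          = (m : ℝ) * ∫ ω, (1 - Real.exp (-(q n) * Y 0 ω)) ∂μ := by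
        rw [Finset.sum_congr rfl (fun i _ => hident_int i)]
        simp [Finset.sum_const, nsmul_eq_mul]
      have h4 := hlap' (q n) hqnpos hqn
      calc ∫ ω, g ω ∂μ ≤ _ := h1
        _ = _ := h2
        _ = (m : ℝ) * ∫ ω, (1 - Real.exp (-(q n) * Y 0 ω)) ∂μ := h3
        _ ≤ (m : ℝ) * (C * q n * Real.log (1 / q n)) := by
            apply mul_le_mul_of_nonneg_left h4 (by positivity)
    -- combine
    have hfin : μ {ω | ε ≤ (n : ℝ) ^ (-α) * S ω} ≠ ⊤ := measure_ne_top _ _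
    have hmono : (μ {ω | ε ≤ (n : ℝ) ^ (-α) * S ω}).toReal
        ≤ (μ {ω | c ≤ g ω}).toReal :=
      ENNReal.toReal_mono (measure_ne_top _ _) (measure_mono hsub)
    have hkey : (μ {ω | ε ≤ (n : ℝ) ^ (-α) * S ω}).toReal ≤ u n := by
      rw [hudef]
      rw [le_div_iff₀ hc]
      calc (μ {ω | ε ≤ (n : ℝ) ^ (-α) * S ω}).toReal * c
          ≤ (μ {ω | c ≤ g ω}).toReal * c := by
            apply mul_le_mul_of_nonneg_right hmono hc.le
        _ = c * (μ {ω | c ≤ g ω}).toReal := mul_comm _ _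
        _ ≤ ∫ ω, g ω ∂μ := hmarkov
        _ ≤ (m : ℝ) * (C * q n * Real.log (1 / q n)) := hI
    calc μ {ω | ε ≤ (n : ℝ) ^ (-α) * S ω}
        = ENNReal.ofReal (μ {ω | ε ≤ (n : ℝ) ^ (-α) * S ω}).toReal :=
          (ENNReal.ofReal_toReal hfin).symm
      _ ≤ ENNReal.ofReal (u n) := ENNReal.ofReal_le_ofReal hkey
  -- u tends to 0
  have hu : Tendsto u atTop (nhds 0) := by
    set w : ℕ → ℝ := fun n =>
      (C / (c * ε)) * ((n:ℝ) ^ ((1:ℝ)/2 - α) * Real.log ε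
        + α * ((n:ℝ) ^ ((1:ℝ)/2 - α) * Real.log n)) with hwdef
    have hw : Tendsto w atTop (nhds 0) := by
      have ha : Tendsto (fun n : ℕ => (n:ℝ) ^ ((1:ℝ)/2 - α)) atTop (nhds 0) := by
        have := (tendsto_rpow_neg_atTop (by linarith : (0:ℝ) < α - 1/2)).comp
          (tendsto_natCast_atTop_atTop (R := ℝ))
        simpa [Function.comp_def, neg_sub] using this
      have hb : Tendsto (fun n : ℕ => (n:ℝ) ^ ((1:ℝ)/2 - α) * Real.log n) atTop (nhds 0) := by
        have hlo := (isLittleO_log_rpow_atTop (by linarith : (0:ℝ) < α - 1/2)).tendsto_div_nhds_zero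
        have := hlo.comp (tendsto_natCast_atTop_atTop (R := ℝ))
        apply this.congr'
        filter_upwards [eventually_ge_atTop 1] with n hn
        have hnpos : (0:ℝ) < (n:ℝ) := by exact_mod_cast hn
        simp only [Function.comp]
        rw [div_eq_mul_inv, ← Real.rpow_neg hnpos.le, neg_sub, mul_comm]
      have := (((ha.mul_const (Real.log ε)).add (hb.const_mul α)).const_mul (C / (c * ε)))
      simpa [hwdef] using this
    have hle : ∀ᶠ n : ℕ in atTop, 0 ≤ u n ∧ u n ≤ w n := by
      have h1 : ∀ᶠ n : ℕ in atTop, q n < min q₀ 1 :=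
        hq_tendsto.eventually_lt_const (lt_min hq₀ one_pos)
      filter_upwards [h1, eventually_ge_atTop 1] with n hqn hn
      have hqnpos := hq_pos n hn
      have hqn1 : q n < 1 := lt_of_lt_of_le hqn (min_le_right _ _)
      have hnpos : (0:ℝ) < (n:ℝ) := by exact_mod_cast hn
      have hlog : 0 ≤ Real.log (1 / q n) :=
        Real.log_nonneg (one_le_one_div hqnpos hqn1.le)
      refine ⟨by rw [hudef]; positivity, ?_⟩
      -- u n ≤ w n
      have hsqrt : (Nat.sqrt n : ℝ) ≤ (n:ℝ) ^ ((1:ℝ)/2) := by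
        rw [← Real.sqrt_eq_rpow]
        calc (Nat.sqrt n : ℝ) = Real.sqrt (((Nat.sqrt n : ℝ))^2) :=
              (Real.sqrt_sq (by positivity)).symm
          _ ≤ Real.sqrt (n:ℝ) := Real.sqrt_le_sqrt (by
              push_cast
              exact_mod_cast Nat.sqrt_le' n)
      have hqval : q n = (n:ℝ) ^ (-α) / ε := rfl
      have hlogval : Real.log (1 / q n) = Real.log ε + α * Real.log n := by
        rw [hqval, one_div_div, Real.log_div hε.ne' (Real.rpow_pos_of_pos hnpos _).ne',
          Real.log_rpow hnpos]
        ring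
      have hK : 0 ≤ C * q n * Real.log (1 / q n) / c := by positivity
      calc u n = (Nat.sqrt n : ℝ) * (C * q n * Real.log (1 / q n) / c) := by
            rw [hudef]; ring
        _ ≤ (n:ℝ) ^ ((1:ℝ)/2) * (C * q n * Real.log (1 / q n) / c) :=
            mul_le_mul_of_nonneg_right hsqrt hK
        _ = w n := by
            have hr : (n:ℝ) ^ ((1:ℝ)/2 - α) = (n:ℝ) ^ ((1:ℝ)/2) * (n:ℝ) ^ (-α) := by
              rw [← Real.rpow_add hnpos]; ring_nf
            rw [hlogval]
            simp only [hwdef, hlogval, hqval, hr]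
            field_simp
    exact tendsto_of_tendsto_of_tendsto_of_le_of_le' tendsto_const_nhds hw
      (hle.mono fun n h => h.1) (hle.mono fun n h => h.2)
  -- final squeeze in ℝ≥0∞
  have hofReal : Tendsto (fun n => ENNReal.ofReal (u n)) atTop (nhds 0) := by
    have := ENNReal.tendsto_ofReal hu
    simpa using this
  refine tendsto_of_tendsto_of_tendsto_of_le_of_le' tendsto_const_nhds hofReal
    (Eventually.of_forall fun n => zero_le) ?_
  have h1 : ∀ᶠ n : ℕ in atTop, q n < q₀ := hq_tendsto.eventually_lt_const hq₀
  filter_upwards [h1, eventually_ge_atTop 1] with n hqn hn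
  exact hbound n hn hqn
end

section
/- Let (Y_i) be i.i.d. nonnegative random variables with E[1 - e^{-qY₁}] ≥ c q ln(1/q) for small q > 0 and some constant c > 0. Then n^{-1/2} ∑_{i=1}^{⌊√n⌋} Y_i → ∞ in probability as n → ∞. -/
open MeasureTheory ProbabilityTheory Real Filter

/-- Let `(Y_i)` be i.i.d. nonnegative random variables with
`E[1 - e^{-qY₁}] ≥ c q ln(1/q)` for small `q > 0`, where `c > 0`. Then
`n^{-1/2} ∑_{i=1}^{⌊√n⌋} Y_i → ∞` in probability as `n → ∞`, i.e.
`P(n^{-1/2} ∑_{i=1}^{⌊√n⌋} Y_i ≤ a) → 0` for every `a > 0`. -/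
theorem sum_over_sqrt_tendsto_infty_in_probability
    {Ω : Type*} [MeasurableSpace Ω] (μ : Measure Ω) [IsProbabilityMeasure μ]
    (Y : ℕ → Ω → ℝ) (hmeas : ∀ i, Measurable (Y i)) (hpos : ∀ i ω, 0 ≤ Y i ω)
    (hindep : iIndepFun (m := fun _ => (inferInstance : MeasurableSpace ℝ)) Y μ)
    (hident : ∀ i, IdentDistrib (Y i) (Y 0) μ μ)
    (c : ℝ) (hc : 0 < c)
    (hlap : ∃ q₀ > (0 : ℝ), ∀ q : ℝ, 0 < q → q < q₀ →
      c * q * Real.log (1 / q) ≤ ∫ ω, (1 - Real.exp (-q * Y 0 ω)) ∂μ) :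
    ∀ a > (0 : ℝ),
      Tendsto (fun n : ℕ =>
          μ {ω | (n : ℝ) ^ (-(1 : ℝ) / 2) * ∑ i ∈ Finset.range (Nat.sqrt n), Y i ω ≤ a})
        atTop (nhds 0) := by
  obtain ⟨q₀, hq₀, hlap⟩ := hlap
  intro a ha
  -- integrability of exp (t * Y i) for t ≤ 0
  have hint : ∀ (t : ℝ), t ≤ 0 → ∀ i, Integrable (fun ω => Real.exp (t * Y i ω)) μ := by
    intro t ht i
    refine (integrable_const (1 : ℝ)).mono' (((hmeas i).const_mul t).exp.aestronglyMeasurable) ?_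
    filter_upwards with ω
    rw [Real.norm_eq_abs, abs_of_pos (Real.exp_pos _)]
    exact Real.exp_le_one_iff.mpr (mul_nonpos_of_nonpos_of_nonneg ht (hpos i ω))
  -- mgf is the same for all i
  have hmgf_eq : ∀ (t : ℝ) (i : ℕ), mgf (Y i) μ t = mgf (Y 0) μ t := by
    intro t i
    exact ((hident i).comp (measurable_exp.comp (measurable_id.const_mul t))).integral_eq
  -- upper bound on mgf of Y 0 at -q
  have hmgf_le : ∀ q : ℝ, 0 < q → q < q₀ →
      mgf (Y 0) μ (-q) ≤ 1 - c * q * Real.log (1 / q) := by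
    intro q hq1 hq2
    have h := hlap q hq1 hq2
    have hI : (∫ ω, (1 - Real.exp (-q * Y 0 ω)) ∂μ) = 1 - mgf (Y 0) μ (-q) := by
      rw [integral_sub (integrable_const 1) (hint (-q) (by linarith) 0), integral_const,
        probReal_univ, smul_eq_mul, mul_one]
      rfl
    rw [hI] at h
    linarith
  -- main eventual bound
  have hmain : ∀ᶠ n : ℕ in atTop,
      (μ {ω | (n : ℝ) ^ (-(1 : ℝ) / 2) * ∑ i ∈ Finset.range (Nat.sqrt n), Y i ω ≤ a}).toReal ≤
        Real.exp a * Real.exp (-(c / 4 * Real.log n)) := by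
    have hq_small : ∀ᶠ n : ℕ in atTop, ((n : ℝ)) ^ (-(1 : ℝ) / 2) < q₀ := by
      have h0 : Tendsto (fun n : ℕ => ((n : ℝ)) ^ (-(1 : ℝ) / 2)) atTop (nhds 0) := by
        have := (tendsto_rpow_neg_atTop (by norm_num : (0:ℝ) < 1/2)).comp
          (tendsto_natCast_atTop_atTop (R := ℝ))
        simpa [Function.comp_def, neg_div] using this
      exact h0.eventually_lt_const hq₀
    filter_upwards [eventually_ge_atTop 4, hq_small] with n hn4 hqsmall
    set m := Nat.sqrt n with hmdef
    set p : ℝ := (n : ℝ) ^ ((1 : ℝ) / 2) with hpdef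
    set q : ℝ := (n : ℝ) ^ (-(1 : ℝ) / 2) with hqdef
    have hn0 : (0 : ℝ) < n := by exact_mod_cast (by omega : 0 < n)
    have hp : 0 < p := Real.rpow_pos_of_pos hn0 _
    have hq0 : 0 < q := Real.rpow_pos_of_pos hn0 _
    have hqp : q = p⁻¹ := by
      rw [hqdef, hpdef, neg_div, Real.rpow_neg hn0.le]
    have hpq : p * q = 1 := by rw [hqp, mul_inv_cancel₀ hp.ne']
    have hps : p = Real.sqrt n := (Real.sqrt_eq_rpow _).symm
    have hsqrt4 : (2 : ℝ) ≤ Real.sqrt n := by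
      rw [show (2:ℝ) = Real.sqrt 4 by
        rw [show (4:ℝ) = 2^2 by norm_num, Real.sqrt_sq (by norm_num : (0:ℝ) ≤ 2)]]
      exact Real.sqrt_le_sqrt (by exact_mod_cast hn4)
    have hmp : p / 2 ≤ (m : ℝ) := by
      have h1 : Real.sqrt n ≤ (m : ℝ) + 1 := by
        rw [hmdef]; exact_mod_cast Real.real_sqrt_le_nat_sqrt_succ
      rw [hps]; linarith
    have hlogn : 0 ≤ Real.log n := Real.log_nonneg (by exact_mod_cast (by omega : 1 ≤ n))
    have hlogq : Real.log (1 / q) = Real.log n / 2 := by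
      rw [one_div, hqp, inv_inv, hpdef, Real.log_rpow hn0]
      ring
    -- set equality
    have hset : {ω | q * ∑ i ∈ Finset.range m, Y i ω ≤ a}
        = {ω | (∑ i ∈ Finset.range m, Y i) ω ≤ a * p} := by
      ext ω
      simp only [Set.mem_setOf_eq, Finset.sum_apply]
      rw [hqp, inv_mul_le_iff₀ hp, mul_comm p a]
    -- Chernoff bound
    have hintS : Integrable (fun ω => Real.exp ((-q) * (∑ i ∈ Finset.range m, Y i) ω)) μ :=
      hindep.integrable_exp_mul_sum hmeas (fun i _ => hint (-q) (by linarith) i)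
    have hcher := measure_le_le_exp_mul_mgf (μ := μ) (X := ∑ i ∈ Finset.range m, Y i)
      (a * p) (by linarith : -q ≤ 0) hintS
    rw [neg_neg] at hcher
    -- mgf of the sum factors
    have hprod : mgf (∑ i ∈ Finset.range m, Y i) μ (-q) = (mgf (Y 0) μ (-q)) ^ m := by
      rw [hindep.mgf_sum hmeas (Finset.range m),
        Finset.prod_congr rfl (fun i _ => hmgf_eq (-q) i), Finset.prod_const,
        Finset.card_range]
    have hbase_le : mgf (Y 0) μ (-q) ≤ Real.exp (-(c * q * (Real.log n / 2))) := by
      have h1 := hmgf_le q hq0 hqsmall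
      rw [hlogq] at h1
      have h2 := Real.add_one_le_exp (-(c * q * (Real.log n / 2)))
      linarith
    have hpow : (mgf (Y 0) μ (-q)) ^ m ≤ Real.exp (-((m : ℝ) * (c * q * (Real.log n / 2)))) := by
      calc (mgf (Y 0) μ (-q)) ^ m ≤ (Real.exp (-(c * q * (Real.log n / 2)))) ^ m :=
            pow_le_pow_left₀ mgf_nonneg hbase_le m
        _ = Real.exp (-((m : ℝ) * (c * q * (Real.log n / 2)))) := by
            rw [← Real.exp_nat_mul]; ring_nf
    have hexpo : c / 4 * Real.log n ≤ (m : ℝ) * (c * q * (Real.log n / 2)) := by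
      have hx0 : 0 ≤ c * q * (Real.log n / 2) := by positivity
      nlinarith [mul_le_mul_of_nonneg_right hmp hx0]
    calc (μ {ω | q * ∑ i ∈ Finset.range m, Y i ω ≤ a}).toReal
        ≤ Real.exp (q * (a * p)) * mgf (∑ i ∈ Finset.range m, Y i) μ (-q) := by
          rw [hset]; exact hcher
      _ ≤ Real.exp a * Real.exp (-(c / 4 * Real.log n)) := by
          have hqa : q * (a * p) = a := by
            rw [mul_comm a p, ← mul_assoc, mul_comm q p, hpq, one_mul]
          rw [hqa, hprod]
          refine mul_le_mul_of_nonneg_left ?_ (Real.exp_pos a).le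
          exact hpow.trans (Real.exp_le_exp.mpr (by linarith))
  -- the bounding sequence tends to 0
  have hg : Tendsto (fun n : ℕ => Real.exp a * Real.exp (-(c / 4 * Real.log n))) atTop
      (nhds 0) := by
    have h1 : Tendsto (fun n : ℕ => c / 4 * Real.log n) atTop atTop :=
      (tendsto_log_atTop.comp (tendsto_natCast_atTop_atTop (R := ℝ))).const_mul_atTop (by positivity)
    have h2 : Tendsto (fun n : ℕ => -(c / 4 * Real.log n)) atTop atBot :=
      tendsto_neg_atTop_atBot.comp h1
    have h3 := Real.tendsto_exp_atBot.comp h2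
    simpa using h3.const_mul (Real.exp a)
  have key : Tendsto (fun n : ℕ =>
      (μ {ω | (n : ℝ) ^ (-(1 : ℝ) / 2) * ∑ i ∈ Finset.range (Nat.sqrt n), Y i ω ≤ a}).toReal)
      atTop (nhds 0) :=
    squeeze_zero' (Eventually.of_forall fun n => ENNReal.toReal_nonneg) hmain hg
  exact (ENNReal.tendsto_toReal_iff (fun n => measure_ne_top μ _) ENNReal.zero_ne_top).mp
    (by simpa using key)
end
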